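/- arXiv:2310.09906 — 3 statements merged into one kernel-verified Lean document; each statement's English description precedes it below -/
import Mathlib

section
/- Let 𝓛 : K[x,x⁻¹] → K be the linear functional defined by the combinatorial moments μ_n, and let (P_n) be the primitive sequence defined by the (ℓ+2)-term recurrence with P_n(x) = x^n for 0 ≤ n ≤ ℓ−1. Then for every n ≥ 0: 𝓛[P_n(x)·x^{−nℓ}] = (−1)^n·∏_{i=1}^n (a_{ℓ+1,i}/a_{ℓ,i}), and 𝓛[P_n(x)·x^ℓ] = a_{ℓ,0}·∏_{i=1}^n a_{ℓ+1,i}. In particular 𝓛[P_n(x)·x^{−nℓ}] ≠ 0. -/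
open scoped BigOperators

section Paths

variable {σ : Type} {K : Type*}

/-- Final point of a path given by its initial point and list of steps. -/
def endPt (vec : σ → ℤ × ℤ) : ℤ × ℤ → List σ → ℤ × ℤ
  | p, [] => p
  | p, s :: rest => endPt vec (p + vec s) rest

/-- All vertices (starting points of steps together with the final point). -/
def verts (vec : σ → ℤ × ℤ) : ℤ × ℤ → List σ → List (ℤ × ℤ)
  | p, [] => [p]
  | p, s :: rest => p :: verts vec (p + vec s) rest

/-- Weight of a path: product of the weights of its steps. -/
def pathWt [Field K] (vec : σ → ℤ × ℤ) (w : σ → ℤ × ℤ → K) :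
    ℤ × ℤ → List σ → K
  | _, [] => 1
  | p, s :: rest => w s p * pathWt vec w (p + vec s) rest

/-- Every step of the path, placed at its starting point, satisfies `ok`. -/
def stepsOK (vec : σ → ℤ × ℤ) (ok : σ → ℤ × ℤ → Prop) :
    ℤ × ℤ → List σ → Prop
  | _, [] => True
  | p, s :: rest => ok s p ∧ stepsOK vec ok (p + vec s) rest

end Paths

section Schroder

variable {K : Type*} [Field K]

/-- Steps of `ℓ`-Schröder paths: `a_i = (i, ℓ - i)` for `0 ≤ i ≤ ℓ` and
`a_{ℓ+1} = (1, -1)`. -/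
def svec (ℓ : ℕ) (i : ℕ) : ℤ × ℤ :=
  if i ≤ ℓ then ((i : ℤ), (ℓ : ℤ) - i) else (1, -1)

/-- `ω` (a list of step indices `≤ ℓ+1`) is an `ℓ`-Schröder path from `p`:
it never goes below the `x`-axis. -/
def IsSchroder (ℓ : ℕ) (p : ℤ × ℤ) (ω : List ℕ) : Prop :=
  (∀ s ∈ ω, s ≤ ℓ + 1) ∧ ∀ q ∈ verts (svec ℓ) p ω, 0 ≤ q.2

/-- Weight of an `ℓ`-Schröder step: `a_0` has weight `1`, and `a_i`
(`1 ≤ i ≤ ℓ+1`) starting at `y`-coordinate `t` has weight `a i t`. -/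
def aWt (a : ℕ → ℕ → K) (s : ℕ) (q : ℤ × ℤ) : K :=
  if s = 0 then 1 else a s q.2.toNat

/-- `B n`: the set of `ℓ`-Schröder paths from `(0, n mod ℓ)` to `(n, 0)`. -/
def BSet (ℓ : ℕ) (n : ℤ) : Set (List ℕ) :=
  {ω | IsSchroder ℓ (0, n % (ℓ : ℤ)) ω ∧
    endPt (svec ℓ) (0, n % (ℓ : ℤ)) ω = (n, 0)}

/-- `w(B n)`: generating function of `B n`. -/
noncomputable def wB (ℓ : ℕ) (a : ℕ → ℕ → K) (n : ℤ) : K :=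
  ∑ᶠ ω ∈ BSet ℓ n, pathWt (svec ℓ) (aWt a) (0, n % (ℓ : ℤ)) ω

/-- Steps of dual `ℓ`-Schröder paths: `A_i = (ℓ-i, ℓ-i)` for `0 ≤ i ≤ ℓ-1`,
`A_ℓ = (ℓ, 0)` and `A_{ℓ+1} = (ℓ-1, -1)`. -/
def dvec (ℓ : ℕ) (i : ℕ) : ℤ × ℤ :=
  if i < ℓ then ((ℓ : ℤ) - i, (ℓ : ℤ) - i)
  else if i = ℓ then ((ℓ : ℤ), 0) else ((ℓ : ℤ) - 1, -1)

/-- `ω` is a dual `ℓ`-Schröder path from `p`. -/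
def IsDualSchroder (ℓ : ℕ) (p : ℤ × ℤ) (ω : List ℕ) : Prop :=
  (∀ s ∈ ω, s ≤ ℓ + 1) ∧ ∀ q ∈ verts (dvec ℓ) p ω, 0 ≤ q.2

/-- Weight of a dual `ℓ`-Schröder step starting at `y`-coordinate `t`:
`(-1)^{ℓ+1} / a ℓ t` for `A_0`, `(-1)^{ℓ+1+i} a i t / a ℓ t` for
`1 ≤ i ≤ ℓ-1` or `i = ℓ+1`, and `1 / a ℓ t` for `A_ℓ`. -/
def dWt (ℓ : ℕ) (a : ℕ → ℕ → K) (s : ℕ) (q : ℤ × ℤ) : K :=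
  if s = 0 then (-1 : K) ^ (ℓ + 1) / a ℓ q.2.toNat
  else if s = ℓ then 1 / a ℓ q.2.toNat
  else (-1 : K) ^ (ℓ + 1 + s) * a s q.2.toNat / a ℓ q.2.toNat

/-- `B̃ n`: the set of dual `ℓ`-Schröder paths from `(0, (-n) mod ℓ)`
to `(n, 0)`. -/
def DSet (ℓ : ℕ) (n : ℤ) : Set (List ℕ) :=
  {ω | IsDualSchroder ℓ (0, (-n) % (ℓ : ℤ)) ω ∧
    endPt (dvec ℓ) (0, (-n) % (ℓ : ℤ)) ω = (n, 0)}

/-- `w(B̃ n)`: generating function of `B̃ n`. -/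
noncomputable def wD (ℓ : ℕ) (a : ℕ → ℕ → K) (n : ℤ) : K :=
  ∑ᶠ ω ∈ DSet ℓ n, pathWt (dvec ℓ) (dWt ℓ a) (0, (-n) % (ℓ : ℤ)) ω

/-- The combinatorial moments: `μ n = a ℓ 0 · w(B_{n-ℓ})` for `n ≥ ℓ`,
`μ n = 0` for `1 ≤ n ≤ ℓ-1`, and `μ n = (-1)^{n mod ℓ} · w(B̃_{-n})`
for `n ≤ 0`. -/
noncomputable def combMoment (ℓ : ℕ) (a : ℕ → ℕ → K) (n : ℤ) : K :=
  if (ℓ : ℤ) ≤ n then a ℓ 0 * wB ℓ a (n - ℓ)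
  else if 1 ≤ n then 0
  else (-1 : K) ^ (n % (ℓ : ℤ)).toNat * wD ℓ a (-n)

end Schroder

/-- The `(ℓ+2)`-term recurrence with the convention `P_{-1} = 0`. -/
def SatisfiesRec {K : Type*} [Field K] (ℓ : ℕ) (a : ℕ → ℕ → K)
    (P : ℕ → Polynomial K) : Prop :=
  ∀ n : ℕ, ℓ ≤ n →
    P n = -(∑ i ∈ Finset.Icc 1 (ℓ - 1), Polynomial.C (a i (n - ℓ)) * P (n - i))
      + (Polynomial.X ^ ℓ - Polynomial.C (a ℓ (n - ℓ))) * P (n - ℓ)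
      - Polynomial.C (a (ℓ + 1) (n - ℓ)) * Polynomial.X ^ ℓ *
        (if n = ℓ then 0 else P (n - ℓ - 1))

section PathLemmas

variable {K : Type*} [Field K]

namespace LBPaux

/-- Paths with steps indexed by `0..ℓ+1`, staying weakly above the x-axis,
from `p` to `q`. -/
def PathSet (vec : ℕ → ℤ × ℤ) (ℓ : ℕ) (p q : ℤ × ℤ) : Set (List ℕ) :=
  {ω | (∀ s ∈ ω, s ≤ ℓ + 1) ∧ (∀ r ∈ verts vec p ω, 0 ≤ r.2) ∧ endPt vec p ω = q}

theorem endPt_shift (vec : ℕ → ℤ × ℤ) (u : ℤ) :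
    ∀ (ω : List ℕ) (p : ℤ × ℤ), endPt vec ((u, 0) + p) ω = (u, 0) + endPt vec p ω
  | [], p => rfl
  | s :: rest, p => by
      rw [endPt, endPt, add_assoc]
      exact endPt_shift vec u rest (p + vec s)

theorem verts_shift (vec : ℕ → ℤ × ℤ) (u : ℤ) :
    ∀ (ω : List ℕ) (p : ℤ × ℤ),
      verts vec ((u, 0) + p) ω = (verts vec p ω).map (fun r => (u, 0) + r)
  | [], p => rfl
  | s :: rest, p => by
      rw [verts, verts, List.map_cons, add_assoc]
      rw [verts_shift vec u rest (p + vec s)]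

theorem pathWt_shift (vec : ℕ → ℤ × ℤ) (w : ℕ → ℤ × ℤ → K)
    (hw : ∀ (s : ℕ) (u : ℤ) (q : ℤ × ℤ), w s ((u, 0) + q) = w s q) (u : ℤ) :
    ∀ (ω : List ℕ) (p : ℤ × ℤ), pathWt vec w ((u, 0) + p) ω = pathWt vec w p ω
  | [], p => rfl
  | s :: rest, p => by
      rw [pathWt, pathWt, hw, add_assoc, pathWt_shift vec w hw u rest (p + vec s)]

theorem pathSet_shift (vec : ℕ → ℤ × ℤ) (ℓ : ℕ) (u : ℤ) (p q : ℤ × ℤ) :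
    PathSet vec ℓ ((u, 0) + p) ((u, 0) + q) = PathSet vec ℓ p q := by
  ext ω
  simp only [PathSet, Set.mem_setOf_eq, endPt_shift, verts_shift, add_right_inj]
  constructor
  · rintro ⟨h1, h2, h3⟩
    refine ⟨h1, fun r hr => ?_, h3⟩
    have := h2 _ (List.mem_map_of_mem (f := fun r => ((u : ℤ), (0 : ℤ)) + r) hr)
    simpa using this
  · rintro ⟨h1, h2, h3⟩
    refine ⟨h1, fun r hr => ?_, h3⟩
    rcases List.mem_map.1 hr with ⟨r', hr', rfl⟩
    simpa using h2 r' hr'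

theorem pathSet_empty_of_neg (vec : ℕ → ℤ × ℤ) (ℓ : ℕ) (p q : ℤ × ℤ)
    (h : p.2 < 0) : PathSet vec ℓ p q = ∅ := by
  ext ω
  simp only [PathSet, Set.mem_setOf_eq, Set.mem_empty_iff_false, iff_false]
  rintro ⟨-, h2, -⟩
  have : p ∈ verts vec p ω := by cases ω <;> simp [verts]
  exact absurd (h2 p this) (by omega)

theorem mem_pathSet_nil (vec : ℕ → ℤ × ℤ) (ℓ : ℕ) (p q : ℤ × ℤ) :
    ([] : List ℕ) ∈ PathSet vec ℓ p q ↔ 0 ≤ p.2 ∧ p = q := by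
  constructor
  · rintro ⟨-, h2, h3⟩
    exact ⟨h2 p (by simp [verts]), h3⟩
  · rintro ⟨h1, h2⟩
    refine ⟨by simp, ?_, h2⟩
    intro r hr
    simp only [verts, List.mem_singleton] at hr
    subst hr; exact h1

theorem mem_pathSet_cons (vec : ℕ → ℤ × ℤ) (ℓ : ℕ) (p q : ℤ × ℤ) (s : ℕ)
    (ω : List ℕ) :
    s :: ω ∈ PathSet vec ℓ p q ↔
      s ≤ ℓ + 1 ∧ 0 ≤ p.2 ∧ ω ∈ PathSet vec ℓ (p + vec s) q := by
  simp only [PathSet, Set.mem_setOf_eq, verts, endPt, List.mem_cons]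
  constructor
  · rintro ⟨h1, h2, h3⟩
    exact ⟨h1 s (Or.inl rfl), h2 p (Or.inl rfl),
      fun t ht => h1 t (Or.inr ht), fun r hr => h2 r (Or.inr hr), h3⟩
  · rintro ⟨hs, hp, h1, h2, h3⟩
    refine ⟨?_, ?_, h3⟩
    · rintro t (rfl | ht)
      · exact hs
      · exact h1 t ht
    · rintro r (rfl | hr)
      · exact hp
      · exact h2 r hr

/-- Decomposition of a path set by the first step. -/
theorem pathSet_decomp (vec : ℕ → ℤ × ℤ) (ℓ : ℕ) (p q : ℤ × ℤ) (hp : 0 ≤ p.2) :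
    PathSet vec ℓ p q =
      (if p = q then {([] : List ℕ)} else ∅) ∪
        ⋃ s : Fin (ℓ + 2), (fun ω => (s : ℕ) :: ω) '' PathSet vec ℓ (p + vec s) q := by
  ext ω
  cases ω with
  | nil =>
    simp only [Set.mem_union, Set.mem_iUnion, Set.mem_image, mem_pathSet_nil]
    constructor
    · rintro ⟨h1, h2⟩; left; simp [h2]
    · rintro (h | ⟨s, ω', -, h⟩)
      · split_ifs at h with hc
        · simp only [Set.mem_singleton_iff] at h
          exact ⟨hp, hc⟩
        · exact absurd h (by simp)
      · exact absurd h (by simp)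
  | cons s rest =>
    simp only [Set.mem_union, Set.mem_iUnion, Set.mem_image, mem_pathSet_cons]
    constructor
    · rintro ⟨hs, -, hrest⟩
      right
      exact ⟨⟨s, by omega⟩, rest, hrest, rfl⟩
    · rintro (h | ⟨s', ω', hω', h⟩)
      · split_ifs at h <;> simp_all
      · injection h with hs' hrest
        subst hs'
        subst hrest
        exact ⟨by omega, hp, hω'⟩

end LBPaux

end PathLemmas
namespace LBPaux

theorem finite_boundedLists (M : ℕ) :
    ∀ N : ℕ, {ω : List ℕ | (∀ s ∈ ω, s < M) ∧ ω.length ≤ N}.Finite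
  | 0 => by
    apply Set.Finite.subset (Set.finite_singleton ([] : List ℕ))
    rintro ω ⟨-, hlen⟩
    simp only [Set.mem_singleton_iff]
    exact List.length_eq_zero_iff.1 (Nat.le_zero.1 hlen)
  | (N + 1) => by
    apply Set.Finite.subset
      ((Set.finite_singleton ([] : List ℕ)).union
        (Set.finite_iUnion (fun s : Fin M =>
          ((finite_boundedLists M N).image (fun ω => (s : ℕ) :: ω)))))
    rintro ω ⟨hmem, hlen⟩
    cases ω with
    | nil => exact Or.inl rfl
    | cons s rest =>
      refine Or.inr (Set.mem_iUnion.2 ⟨⟨s, hmem s (by simp)⟩, rest, ⟨?_, ?_⟩, rfl⟩)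
      · exact fun t ht => hmem t (List.mem_cons_of_mem _ ht)
      · simpa using hlen

theorem length_le_of_mem (vec : ℕ → ℤ × ℤ) (ℓ : ℕ) (φ : ℤ × ℤ → ℤ)
    (hφ : ∀ s ≤ ℓ + 1, ∀ p : ℤ × ℤ, φ (p + vec s) + 1 ≤ φ p) :
    ∀ (ω : List ℕ) (p q : ℤ × ℤ), ω ∈ PathSet vec ℓ p q →
      (ω.length : ℤ) ≤ φ p - φ q
  | [], p, q, h => by
    rcases (mem_pathSet_nil vec ℓ p q).1 h with ⟨-, rfl⟩
    simp
  | s :: rest, p, q, h => by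
    rcases (mem_pathSet_cons vec ℓ p q s rest).1 h with ⟨hs, -, hrest⟩
    have h1 := length_le_of_mem vec ℓ φ hφ rest (p + vec s) q hrest
    have h2 := hφ s hs p
    simp only [List.length_cons]
    push_cast
    omega

theorem pathSet_finite (vec : ℕ → ℤ × ℤ) (ℓ : ℕ) (φ : ℤ × ℤ → ℤ)
    (hφ : ∀ s ≤ ℓ + 1, ∀ p : ℤ × ℤ, φ (p + vec s) + 1 ≤ φ p) (p q : ℤ × ℤ) :
    (PathSet vec ℓ p q).Finite := by
  apply Set.Finite.subset (finite_boundedLists (ℓ + 2) (φ p - φ q).toNat)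
  intro ω hω
  refine ⟨fun s hs => ?_, ?_⟩
  · have := hω.1 s hs; omega
  · have := length_le_of_mem vec ℓ φ hφ ω p q hω
    omega

variable {K : Type*} [Field K]

/-- Weights of paths of length at most `N` from `(0,h)` to `(x,0)`,
computed recursively. -/
def WF (vec : ℕ → ℤ × ℤ) (w : ℕ → ℤ × ℤ → K) (ℓ : ℕ) : ℕ → ℕ → ℤ → K
  | 0, h, x => if h = 0 ∧ x = 0 then 1 else 0
  | (N + 1), h, x =>
    (if h = 0 ∧ x = 0 then 1 else 0) +
      ∑ s ∈ Finset.range (ℓ + 2),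
        if 0 ≤ (h : ℤ) + (vec s).2 then
          w s (0, (h : ℤ)) * WF vec w ℓ N ((h : ℤ) + (vec s).2).toNat (x - (vec s).1)
        else 0

/-- The genuine finsum of weights over the path set. -/
noncomputable def Sval (vec : ℕ → ℤ × ℤ) (w : ℕ → ℤ × ℤ → K) (ℓ : ℕ)
    (h : ℕ) (x : ℤ) : K :=
  ∑ᶠ ω ∈ PathSet vec ℓ ((0 : ℤ), (h : ℤ)) (x, 0), pathWt vec w ((0 : ℤ), (h : ℤ)) ω

theorem finsum_mem_mul_left {α : Type*} (c : K) (S : Set α) (hS : S.Finite) (f : α → K) :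
    ∑ᶠ ω ∈ S, c * f ω = c * ∑ᶠ ω ∈ S, f ω := by
  classical
  rw [← hS.coe_toFinset, finsum_mem_coe_finset, finsum_mem_coe_finset, Finset.mul_sum]

theorem bridge (vec : ℕ → ℤ × ℤ) (w : ℕ → ℤ × ℤ → K)
    (hw : ∀ (s : ℕ) (u : ℤ) (q : ℤ × ℤ), w s ((u, 0) + q) = w s q) (ℓ : ℕ) :
    ∀ (N : ℕ) (h : ℕ) (x : ℤ),
      (∀ ω ∈ PathSet vec ℓ ((0 : ℤ), (h : ℤ)) (x, 0), ω.length ≤ N) →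
      Sval vec w ℓ h x = WF vec w ℓ N h x
  | 0, h, x, hlen => by
    rw [Sval, WF]
    by_cases hc : h = 0 ∧ x = 0
    · obtain ⟨rfl, rfl⟩ := hc
      have hset : PathSet vec ℓ ((0 : ℤ), ((0 : ℕ) : ℤ)) ((0 : ℤ), 0) = {[]} := by
        apply Set.eq_singleton_iff_unique_mem.2
        constructor
        · exact (mem_pathSet_nil _ _ _ _).2 ⟨by norm_num, by norm_num⟩
        · intro ω hω
          have := hlen ω hω
          exact List.length_eq_zero_iff.1 (Nat.le_zero.1 this)
      rw [hset, finsum_mem_singleton]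
      simp [pathWt]
    · rw [if_neg hc]
      have hset : PathSet vec ℓ ((0 : ℤ), (h : ℤ)) (x, 0) = ∅ := by
        ext ω
        simp only [Set.mem_empty_iff_false, iff_false]
        intro hω
        have := hlen ω hω
        have hω0 : ω = [] := List.length_eq_zero_iff.1 (Nat.le_zero.1 this)
        subst hω0
        rcases (mem_pathSet_nil _ _ _ _).1 hω with ⟨-, heq⟩
        apply hc
        constructor
        · have := congrArg Prod.snd heq; simp at this; omega
        · have := congrArg Prod.fst heq; simpa using this.symm
      rw [hset]
      simp
  | (N + 1), h, x, hlen => by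
    rw [Sval, WF]
    have hfin : (PathSet vec ℓ ((0 : ℤ), (h : ℤ)) (x, 0)).Finite := by
      apply Set.Finite.subset (finite_boundedLists (ℓ + 2) (N + 1))
      intro ω hω
      exact ⟨fun s hs => by have := hω.1 s hs; omega, hlen ω hω⟩
    rw [pathSet_decomp vec ℓ _ _ (by simp)]
    have hdec := pathSet_decomp vec ℓ ((0 : ℤ), (h : ℤ)) ((x : ℤ), (0 : ℤ)) (by simp)
    have hfinE : (if ((0 : ℤ), (h : ℤ)) = ((x : ℤ), (0 : ℤ)) then {([] : List ℕ)} else (∅ : Set (List ℕ))).Finite := by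
      split_ifs <;> simp
    have hfinU : ∀ s : Fin (ℓ + 2),
        ((fun ω => (s : ℕ) :: ω) '' PathSet vec ℓ (((0 : ℤ), (h : ℤ)) + vec s) (x, 0)).Finite := by
      intro s
      apply Set.Finite.subset hfin
      intro ω hω
      rw [hdec]
      exact Set.mem_union_right _ (Set.mem_iUnion.2 ⟨s, hω⟩)
    rw [finsum_mem_union _ hfinE (Set.finite_iUnion hfinU)]
    · congr 1
      · -- empty-path part
        have hiff : (((0 : ℤ), (h : ℤ)) = ((x : ℤ), (0 : ℤ))) ↔ (h = 0 ∧ x = 0) := by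
          constructor
          · intro hc
            constructor
            · have := congrArg Prod.snd hc; simp at this; omega
            · have := congrArg Prod.fst hc; simpa using this.symm
          · rintro ⟨rfl, rfl⟩; simp
        by_cases hc : h = 0 ∧ x = 0
        · rw [if_pos (hiff.2 hc), if_pos hc, finsum_mem_singleton]
          simp [pathWt]
        · rw [if_neg (fun hh => hc (hiff.1 hh)), if_neg hc, finsum_mem_empty]
      · -- the union part
        rw [finsum_mem_iUnion]
        · rw [finsum_eq_sum_of_fintype, Fin.sum_univ_eq_sum_range
            (fun s => ∑ᶠ ω ∈ (fun ω => s :: ω) '' PathSet vec ℓ (((0 : ℤ), (h : ℤ)) + vec s) (x, 0),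
              pathWt vec w ((0 : ℤ), (h : ℤ)) ω)]
          apply Finset.sum_congr rfl
          intro s hs
          rw [finsum_mem_image (fun ω1 _ ω2 _ h12 => by injection h12)]
          have hcons : ∀ ω, pathWt vec w ((0 : ℤ), (h : ℤ)) (s :: ω) =
              w s ((0 : ℤ), (h : ℤ)) * pathWt vec w (((0 : ℤ), (h : ℤ)) + vec s) ω := fun ω => rfl
          by_cases hpos : 0 ≤ (h : ℤ) + (vec s).2
          · rw [if_pos hpos]
            -- shift the child set to the origin
            have hshift : (((0 : ℤ), (h : ℤ)) + vec s) =
                ((((vec s).1 : ℤ), (0 : ℤ)) + ((0 : ℤ), ((h : ℤ) + (vec s).2))) := by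
              simp [Prod.ext_iff]
            have htgt : ((x : ℤ), (0 : ℤ)) =
                ((((vec s).1 : ℤ), (0 : ℤ)) + ((x - (vec s).1 : ℤ), (0 : ℤ))) := by
              simp [Prod.ext_iff]
            have hsetsh : PathSet vec ℓ (((0 : ℤ), (h : ℤ)) + vec s) ((x : ℤ), (0 : ℤ)) =
                PathSet vec ℓ ((0 : ℤ), ((h : ℤ) + (vec s).2)) ((x - (vec s).1 : ℤ), (0 : ℤ)) := by
              rw [hshift, htgt, pathSet_shift]
            have hwt : ∀ ω, pathWt vec w (((0 : ℤ), (h : ℤ)) + vec s) ω =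
                pathWt vec w ((0 : ℤ), ((h : ℤ) + (vec s).2)) ω := by
              intro ω
              conv_lhs => rw [hshift]
              rw [pathWt_shift vec w hw]
            have hnat : ((h : ℤ) + (vec s).2) = ((((h : ℤ) + (vec s).2).toNat : ℕ) : ℤ) :=
              (Int.toNat_of_nonneg hpos).symm
            calc ∑ᶠ ω ∈ PathSet vec ℓ (((0 : ℤ), (h : ℤ)) + vec s) ((x : ℤ), (0 : ℤ)),
                  pathWt vec w ((0 : ℤ), (h : ℤ)) (s :: ω)
                = ∑ᶠ ω ∈ PathSet vec ℓ ((0 : ℤ), ((((h : ℤ) + (vec s).2).toNat : ℕ) : ℤ))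
                    ((x - (vec s).1 : ℤ), (0 : ℤ)),
                    w s ((0 : ℤ), (h : ℤ)) * pathWt vec w ((0 : ℤ), ((((h : ℤ) + (vec s).2).toNat : ℕ) : ℤ)) ω := by
                  rw [hsetsh, ← hnat]
                  apply finsum_mem_congr rfl
                  intro ω hω
                  rw [hcons, hwt]
              _ = w s ((0 : ℤ), (h : ℤ)) * WF vec w ℓ N (((h : ℤ) + (vec s).2).toNat) (x - (vec s).1) := by
                  have hfinc : (PathSet vec ℓ ((0 : ℤ), ((((h : ℤ) + (vec s).2).toNat : ℕ) : ℤ))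
                      ((x - (vec s).1 : ℤ), (0 : ℤ))).Finite := by
                    rw [← hnat, ← hsetsh]
                    exact Set.Finite.of_finite_image (hfinU ⟨s, Finset.mem_range.1 hs⟩)
                      (fun a _ b _ hab => by injection hab)
                  rw [finsum_mem_mul_left _ _ hfinc]
                  rw [← Sval]
                  congr 1
                  apply bridge vec w hw ℓ N
                  intro ω hω
                  rw [← hnat, ← hsetsh] at hω
                  have hmem : s :: ω ∈ PathSet vec ℓ ((0 : ℤ), (h : ℤ)) ((x : ℤ), (0 : ℤ)) := by
                    rw [mem_pathSet_cons]
                    exact ⟨by have := Finset.mem_range.1 hs; omega, by simp, hω⟩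
                  have := hlen _ hmem
                  simpa using this
          · rw [if_neg hpos]
            have : PathSet vec ℓ (((0 : ℤ), (h : ℤ)) + vec s) ((x : ℤ), (0 : ℤ)) = ∅ := by
              apply pathSet_empty_of_neg
              simpa using (by omega : (h : ℤ) + (vec s).2 < 0)
            rw [this, finsum_mem_empty]
        · -- pairwise disjoint
          intro s t hst
          simp only [Function.onFun, Set.disjoint_left]
          rintro ω ⟨ω1, -, rfl⟩ ⟨ω2, -, hh⟩
          apply hst
          injection hh with h1 h2
          exact Fin.ext (by omega)
        · exact hfinU
    · -- disjoint E from union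
      simp only [Set.disjoint_left]
      intro ω hω
      split_ifs at hω with hc
      · simp only [Set.mem_singleton_iff] at hω
        subst hω
        intro hmem
        rcases Set.mem_iUnion.1 hmem with ⟨t, ω', -, hh⟩
        exact List.cons_ne_nil _ _ hh
      · simp at hω

end LBPaux
namespace LBPaux

variable {K : Type*} [Field K]

/-- The potential for Schröder paths. -/
def phiS (ℓ : ℕ) (p : ℤ × ℤ) : ℤ := -((ℓ : ℤ) + 1) * p.1 - p.2

theorem phiS_decr (ℓ : ℕ) (hℓ : 1 ≤ ℓ) :
    ∀ s ≤ ℓ + 1, ∀ p : ℤ × ℤ, phiS ℓ (p + svec ℓ s) + 1 ≤ phiS ℓ p := by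
  intro s hs p
  have h1 : (1 : ℤ) ≤ (ℓ : ℤ) := by exact_mod_cast hℓ
  by_cases h : s ≤ ℓ
  · have hsi : ((s : ℤ)) ≤ (ℓ : ℤ) := by exact_mod_cast h
    have h2 : (0 : ℤ) ≤ (ℓ : ℤ) * (s : ℤ) := by positivity
    simp only [phiS, svec, if_pos h, Prod.fst_add, Prod.snd_add]
    nlinarith
  · simp only [phiS, svec, if_neg h, Prod.fst_add, Prod.snd_add]
    nlinarith

theorem aWt_shift (a : ℕ → ℕ → K) : ∀ (s : ℕ) (u : ℤ) (q : ℤ × ℤ),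
    aWt a s ((u, 0) + q) = aWt a s q := by
  intro s u q
  simp [aWt, Prod.snd_add]

theorem Sv_eq_WF {ℓ : ℕ} (hℓ : 1 ≤ ℓ) (a : ℕ → ℕ → K) (N : ℕ) (h : ℕ) (x : ℤ)
    (hN : ((ℓ : ℤ) + 1) * x - h ≤ N) :
    Sval (svec ℓ) (aWt a) ℓ h x = WF (svec ℓ) (aWt a) ℓ N h x := by
  apply bridge _ _ (aWt_shift a) ℓ N
  intro ω hω
  have hlen := length_le_of_mem (svec ℓ) ℓ (phiS ℓ) (phiS_decr ℓ hℓ) ω _ _ hω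
  have : phiS ℓ ((0 : ℤ), (h : ℤ)) - phiS ℓ ((x : ℤ), (0 : ℤ)) = ((ℓ : ℤ) + 1) * x - h := by
    simp [phiS]; ring
  omega

theorem WF_S_rec {ℓ : ℕ} (hℓ : 1 ≤ ℓ) (a : ℕ → ℕ → K) (N : ℕ) (h : ℕ) (x : ℤ) :
    WF (svec ℓ) (aWt a) ℓ (N + 1) h x =
      (if h = 0 ∧ x = 0 then 1 else 0)
      + WF (svec ℓ) (aWt a) ℓ N (h + ℓ) x
      + (∑ i ∈ Finset.Icc 1 (ℓ - 1), a i h * WF (svec ℓ) (aWt a) ℓ N (h + (ℓ - i)) (x - i))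
      + a ℓ h * WF (svec ℓ) (aWt a) ℓ N h (x - ℓ)
      + (if h = 0 then 0 else a (ℓ + 1) h * WF (svec ℓ) (aWt a) ℓ N (h - 1) (x - 1)) := by
  rw [WF]
  have hsplit : Finset.range (ℓ + 2) = insert 0 (insert (ℓ + 1) (insert ℓ (Finset.Icc 1 (ℓ - 1)))) := by
    ext t
    simp only [Finset.mem_range, Finset.mem_insert, Finset.mem_Icc]
    omega
  rw [hsplit, Finset.sum_insert (by simp only [Finset.mem_insert, Finset.mem_Icc]; omega),
    Finset.sum_insert (by simp only [Finset.mem_insert, Finset.mem_Icc]; omega),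
    Finset.sum_insert (by simp only [Finset.mem_Icc]; omega)]
  have e0 : (if 0 ≤ (h : ℤ) + (svec ℓ 0).2 then
      aWt a 0 (0, (h : ℤ)) * WF (svec ℓ) (aWt a) ℓ N ((h : ℤ) + (svec ℓ 0).2).toNat (x - (svec ℓ 0).1)
      else 0) = WF (svec ℓ) (aWt a) ℓ N (h + ℓ) x := by
    have hv : svec ℓ 0 = ((0 : ℤ), (ℓ : ℤ)) := by simp [svec]
    rw [hv]
    rw [if_pos (by positivity)]
    have ht : ((h : ℤ) + (ℓ : ℤ)).toNat = h + ℓ := by omega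
    simp [aWt, ht]
  have el : (if 0 ≤ (h : ℤ) + (svec ℓ ℓ).2 then
      aWt a ℓ (0, (h : ℤ)) * WF (svec ℓ) (aWt a) ℓ N ((h : ℤ) + (svec ℓ ℓ).2).toNat (x - (svec ℓ ℓ).1)
      else 0) = a ℓ h * WF (svec ℓ) (aWt a) ℓ N h (x - ℓ) := by
    have hv : svec ℓ ℓ = ((ℓ : ℤ), (0 : ℤ)) := by simp [svec]
    rw [hv]
    rw [if_pos (by positivity)]
    have ht : ((h : ℤ) + 0).toNat = h := by omega
    have hz : ℓ ≠ 0 := by omega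
    simp [aWt, ht, hz]
  have el1 : (if 0 ≤ (h : ℤ) + (svec ℓ (ℓ + 1)).2 then
      aWt a (ℓ + 1) (0, (h : ℤ)) * WF (svec ℓ) (aWt a) ℓ N ((h : ℤ) + (svec ℓ (ℓ + 1)).2).toNat (x - (svec ℓ (ℓ + 1)).1)
      else 0) = (if h = 0 then 0 else a (ℓ + 1) h * WF (svec ℓ) (aWt a) ℓ N (h - 1) (x - 1)) := by
    have hv : svec ℓ (ℓ + 1) = ((1 : ℤ), (-1 : ℤ)) := by simp [svec]
    rw [hv]
    by_cases hh : h = 0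
    · subst hh
      rw [if_neg (by norm_num), if_pos rfl]
    · rw [if_pos (by omega), if_neg hh]
      have ht : ((h : ℤ) + (-1 : ℤ)).toNat = h - 1 := by omega
      have hz : ℓ + 1 ≠ 0 := by omega
      simp [aWt, ht, hz]
  have esum : (∑ i ∈ Finset.Icc 1 (ℓ - 1),
      if 0 ≤ (h : ℤ) + (svec ℓ i).2 then
        aWt a i (0, (h : ℤ)) * WF (svec ℓ) (aWt a) ℓ N ((h : ℤ) + (svec ℓ i).2).toNat (x - (svec ℓ i).1)
      else 0)
      = ∑ i ∈ Finset.Icc 1 (ℓ - 1), a i h * WF (svec ℓ) (aWt a) ℓ N (h + (ℓ - i)) (x - i) := by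
    apply Finset.sum_congr rfl
    intro i hi
    rw [Finset.mem_Icc] at hi
    have hv : svec ℓ i = ((i : ℤ), (ℓ : ℤ) - i) := by
      simp only [svec, if_pos (by omega : i ≤ ℓ)]
    rw [hv]
    rw [if_pos (by simp only; omega)]
    have ht : ((h : ℤ) + ((ℓ : ℤ) - i)).toNat = h + (ℓ - i) := by omega
    have hz : i ≠ 0 := by omega
    simp [aWt, ht, hz]
  rw [e0, el, el1, esum]
  ring

theorem WF_S_vanish {ℓ : ℕ} (hℓ : 1 ≤ ℓ) (a : ℕ → ℕ → K) :
    ∀ (N : ℕ) (h : ℕ) (x : ℤ), x < (h : ℤ) → WF (svec ℓ) (aWt a) ℓ N h x = 0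
  | 0, h, x, hx => by
    rw [WF, if_neg]
    rintro ⟨rfl, rfl⟩
    simp at hx
  | (N + 1), h, x, hx => by
    rw [WF_S_rec hℓ]
    rw [WF_S_vanish hℓ a N (h + ℓ) x (by push_cast; omega)]
    rw [WF_S_vanish hℓ a N h (x - ℓ) (by push_cast; omega)]
    rw [Finset.sum_eq_zero (fun i hi => by
      rw [Finset.mem_Icc] at hi
      rw [WF_S_vanish hℓ a N (h + (ℓ - i)) (x - i) (by push_cast; omega)]
      ring)]
    have hdown : (if h = 0 then 0 else a (ℓ + 1) h * WF (svec ℓ) (aWt a) ℓ N (h - 1) (x - 1)) = 0 := by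
      by_cases hh : h = 0
      · rw [if_pos hh]
      · rw [if_neg hh, WF_S_vanish hℓ a N (h - 1) (x - 1) (by push_cast; omega), mul_zero]
    rw [hdown, if_neg (by rintro ⟨rfl, rfl⟩; simp at hx)]
    ring

theorem WF_S_diag {ℓ : ℕ} (hℓ : 1 ≤ ℓ) (a : ℕ → ℕ → K) :
    ∀ (N : ℕ) (h : ℕ), h ≤ N → WF (svec ℓ) (aWt a) ℓ N h (h : ℤ) =
      ∏ t ∈ Finset.Icc 1 h, a (ℓ + 1) t
  | 0, h, hh => by
    interval_cases h
    rw [WF, if_pos ⟨rfl, rfl⟩]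
    simp
  | (N + 1), h, hh => by
    rw [WF_S_rec hℓ]
    rw [WF_S_vanish hℓ a N (h + ℓ) h (by push_cast; omega)]
    rw [WF_S_vanish hℓ a N h ((h : ℤ) - ℓ) (by push_cast; omega)]
    rw [Finset.sum_eq_zero (fun i hi => by
      rw [Finset.mem_Icc] at hi
      rw [WF_S_vanish hℓ a N (h + (ℓ - i)) ((h : ℤ) - i) (by push_cast; omega)]
      ring)]
    by_cases hh0 : h = 0
    · subst hh0
      rw [if_pos ⟨rfl, rfl⟩, if_pos rfl]
      simp
    · rw [if_neg (by rintro ⟨rfl, -⟩; exact hh0 rfl), if_neg hh0]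
      have hcast : (h : ℤ) - 1 = ((h - 1 : ℕ) : ℤ) := by omega
      rw [hcast, WF_S_diag hℓ a N (h - 1) (by omega)]
      have hprod : ∏ t ∈ Finset.Icc 1 h, a (ℓ + 1) t
          = (∏ t ∈ Finset.Icc 1 (h - 1), a (ℓ + 1) t) * a (ℓ + 1) h := by
        conv_lhs => rw [show h = (h - 1) + 1 by omega]
        rw [Finset.prod_Icc_succ_top (by omega), show (h - 1) + 1 = h by omega]
      rw [hprod]
      ring

theorem Sv_vanish {ℓ : ℕ} (hℓ : 1 ≤ ℓ) (a : ℕ → ℕ → K) (h : ℕ) (x : ℤ)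
    (hx : x < (h : ℤ)) : Sval (svec ℓ) (aWt a) ℓ h x = 0 := by
  rw [Sv_eq_WF hℓ a (((ℓ : ℤ) + 1) * x - h).toNat h x (Int.self_le_toNat _)]
  exact WF_S_vanish hℓ a _ h x hx

theorem Sv_diag {ℓ : ℕ} (hℓ : 1 ≤ ℓ) (a : ℕ → ℕ → K) (h : ℕ) :
    Sval (svec ℓ) (aWt a) ℓ h (h : ℤ) = ∏ t ∈ Finset.Icc 1 h, a (ℓ + 1) t := by
  rw [Sv_eq_WF hℓ a ((ℓ + 1) * h) h h (by push_cast; nlinarith [Nat.zero_le (ℓ * h)])]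
  exact WF_S_diag hℓ a _ h (by nlinarith [Nat.zero_le (ℓ * h)])

theorem Sv_rec {ℓ : ℕ} (hℓ : 1 ≤ ℓ) (a : ℕ → ℕ → K) (h : ℕ) (x : ℤ) :
    Sval (svec ℓ) (aWt a) ℓ h x =
      (if h = 0 ∧ x = 0 then 1 else 0)
      + Sval (svec ℓ) (aWt a) ℓ (h + ℓ) x
      + (∑ i ∈ Finset.Icc 1 (ℓ - 1), a i h * Sval (svec ℓ) (aWt a) ℓ (h + (ℓ - i)) (x - i))
      + a ℓ h * Sval (svec ℓ) (aWt a) ℓ h (x - ℓ)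
      + (if h = 0 then 0 else a (ℓ + 1) h * Sval (svec ℓ) (aWt a) ℓ (h - 1) (x - 1)) := by
  set N := (((ℓ : ℤ) + 1) * x - h).toNat with hN
  have hzN : ((ℓ : ℤ) + 1) * x - h ≤ N := Int.self_le_toNat _
  have h1 : (1 : ℤ) ≤ (ℓ : ℤ) := by exact_mod_cast hℓ
  rw [Sv_eq_WF hℓ a (N + 1) h x (by push_cast; omega), WF_S_rec hℓ]
  rw [← Sv_eq_WF hℓ a N (h + ℓ) x (by push_cast; omega)]
  rw [← Sv_eq_WF hℓ a N h (x - ℓ) (by push_cast; nlinarith)]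
  have hsum : (∑ i ∈ Finset.Icc 1 (ℓ - 1), a i h * WF (svec ℓ) (aWt a) ℓ N (h + (ℓ - i)) (x - i))
      = ∑ i ∈ Finset.Icc 1 (ℓ - 1), a i h * Sval (svec ℓ) (aWt a) ℓ (h + (ℓ - i)) (x - i) := by
    apply Finset.sum_congr rfl
    intro i hi
    rw [Finset.mem_Icc] at hi
    have h2 : (0 : ℤ) ≤ (ℓ : ℤ) * (i : ℤ) := by positivity
    have h3 : ((i : ℤ)) ≤ (ℓ : ℤ) - 1 := by exact_mod_cast (by omega : (i:ℤ) ≤ (ℓ:ℤ) - 1)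
    rw [← Sv_eq_WF hℓ a N (h + (ℓ - i)) (x - i) (by push_cast [(by omega : i ≤ ℓ)]; nlinarith)]
  rw [hsum]
  by_cases hh : h = 0
  · subst hh; rfl
  · rw [if_neg hh, if_neg hh, ← Sv_eq_WF hℓ a N (h - 1) (x - 1) (by push_cast [(by omega : 1 ≤ h)]; nlinarith)]

end LBPaux
namespace LBPaux

variable {K : Type*} [Field K]

/-- The potential for dual Schröder paths. -/
def phiD (p : ℤ × ℤ) : ℤ := -2 * p.1 + p.2

theorem phiD_decr (ℓ : ℕ) (hℓ : 1 ≤ ℓ) :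
    ∀ s ≤ ℓ + 1, ∀ p : ℤ × ℤ, phiD (p + dvec ℓ s) + 1 ≤ phiD p := by
  intro s hs p
  have h1 : (1 : ℤ) ≤ (ℓ : ℤ) := by exact_mod_cast hℓ
  by_cases h : s < ℓ
  · have hsi : ((s : ℤ)) < (ℓ : ℤ) := by exact_mod_cast h
    simp only [phiD, dvec, if_pos h, Prod.fst_add, Prod.snd_add]
    nlinarith
  · by_cases h2 : s = ℓ
    · simp only [phiD, dvec, if_neg h, if_pos h2, Prod.fst_add, Prod.snd_add]
      nlinarith
    · simp only [phiD, dvec, if_neg h, if_neg h2, Prod.fst_add, Prod.snd_add]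
      nlinarith

theorem dWt_shift (ℓ : ℕ) (a : ℕ → ℕ → K) : ∀ (s : ℕ) (u : ℤ) (q : ℤ × ℤ),
    dWt ℓ a s ((u, 0) + q) = dWt ℓ a s q := by
  intro s u q
  simp [dWt, Prod.snd_add]

theorem Dv_eq_WF {ℓ : ℕ} (hℓ : 1 ≤ ℓ) (a : ℕ → ℕ → K) (N : ℕ) (h : ℕ) (x : ℤ)
    (hN : (h : ℤ) + 2 * x ≤ N) :
    Sval (dvec ℓ) (dWt ℓ a) ℓ h x = WF (dvec ℓ) (dWt ℓ a) ℓ N h x := by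
  apply bridge _ _ (dWt_shift ℓ a) ℓ N
  intro ω hω
  have hlen := length_le_of_mem (dvec ℓ) ℓ phiD (phiD_decr ℓ hℓ) ω _ _ hω
  have : phiD ((0 : ℤ), (h : ℤ)) - phiD ((x : ℤ), (0 : ℤ)) = (h : ℤ) + 2 * x := by
    simp only [phiD]; ring
  omega

theorem WF_D_rec {ℓ : ℕ} (hℓ : 1 ≤ ℓ) (a : ℕ → ℕ → K) (N : ℕ) (h : ℕ) (x : ℤ) :
    WF (dvec ℓ) (dWt ℓ a) ℓ (N + 1) h x =
      (if h = 0 ∧ x = 0 then 1 else 0)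
      + ((-1 : K) ^ (ℓ + 1) / a ℓ h) * WF (dvec ℓ) (dWt ℓ a) ℓ N (h + ℓ) (x - ℓ)
      + (∑ i ∈ Finset.Icc 1 (ℓ - 1), ((-1 : K) ^ (ℓ + 1 + i) * a i h / a ℓ h) *
          WF (dvec ℓ) (dWt ℓ a) ℓ N (h + (ℓ - i)) (x - ((ℓ : ℤ) - i)))
      + (1 / a ℓ h) * WF (dvec ℓ) (dWt ℓ a) ℓ N h (x - ℓ)
      + (if h = 0 then 0 else (a (ℓ + 1) h / a ℓ h) *
          WF (dvec ℓ) (dWt ℓ a) ℓ N (h - 1) (x - ((ℓ : ℤ) - 1))) := by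
  rw [WF]
  have hsplit : Finset.range (ℓ + 2) = insert 0 (insert (ℓ + 1) (insert ℓ (Finset.Icc 1 (ℓ - 1)))) := by
    ext t
    simp only [Finset.mem_range, Finset.mem_insert, Finset.mem_Icc]
    omega
  rw [hsplit, Finset.sum_insert (by simp only [Finset.mem_insert, Finset.mem_Icc]; omega),
    Finset.sum_insert (by simp only [Finset.mem_insert, Finset.mem_Icc]; omega),
    Finset.sum_insert (by simp only [Finset.mem_Icc]; omega)]
  have e0 : (if 0 ≤ (h : ℤ) + (dvec ℓ 0).2 then
      dWt ℓ a 0 (0, (h : ℤ)) * WF (dvec ℓ) (dWt ℓ a) ℓ N ((h : ℤ) + (dvec ℓ 0).2).toNat (x - (dvec ℓ 0).1)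
      else 0) = ((-1 : K) ^ (ℓ + 1) / a ℓ h) * WF (dvec ℓ) (dWt ℓ a) ℓ N (h + ℓ) (x - ℓ) := by
    have hv : dvec ℓ 0 = (((ℓ : ℤ)), ((ℓ : ℤ))) := by
      simp only [dvec, if_pos (by omega : 0 < ℓ)]
      norm_num
    rw [hv]
    rw [if_pos (by positivity)]
    have ht : ((h : ℤ) + (ℓ : ℤ)).toNat = h + ℓ := by omega
    simp [dWt, ht]
  have el : (if 0 ≤ (h : ℤ) + (dvec ℓ ℓ).2 then
      dWt ℓ a ℓ (0, (h : ℤ)) * WF (dvec ℓ) (dWt ℓ a) ℓ N ((h : ℤ) + (dvec ℓ ℓ).2).toNat (x - (dvec ℓ ℓ).1)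
      else 0) = (1 / a ℓ h) * WF (dvec ℓ) (dWt ℓ a) ℓ N h (x - ℓ) := by
    have hv : dvec ℓ ℓ = (((ℓ : ℤ)), (0 : ℤ)) := by simp [dvec]
    rw [hv]
    rw [if_pos (by positivity)]
    have ht : ((h : ℤ) + 0).toNat = h := by omega
    have hz : ℓ ≠ 0 := by omega
    simp [dWt, ht, hz]
  have el1 : (if 0 ≤ (h : ℤ) + (dvec ℓ (ℓ + 1)).2 then
      dWt ℓ a (ℓ + 1) (0, (h : ℤ)) * WF (dvec ℓ) (dWt ℓ a) ℓ N ((h : ℤ) + (dvec ℓ (ℓ + 1)).2).toNat (x - (dvec ℓ (ℓ + 1)).1)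
      else 0) = (if h = 0 then 0 else (a (ℓ + 1) h / a ℓ h) *
          WF (dvec ℓ) (dWt ℓ a) ℓ N (h - 1) (x - ((ℓ : ℤ) - 1))) := by
    have hv : dvec ℓ (ℓ + 1) = (((ℓ : ℤ) - 1), (-1 : ℤ)) := by
      simp only [dvec, if_neg (by omega : ¬ ℓ + 1 < ℓ), if_neg (by omega : ¬ ℓ + 1 = ℓ)]
    rw [hv]
    by_cases hh : h = 0
    · subst hh
      rw [if_neg (by norm_num), if_pos rfl]
    · rw [if_pos (by omega), if_neg hh]
      have ht : ((h : ℤ) + (-1 : ℤ)).toNat = h - 1 := by omega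
      have hz1 : ℓ + 1 ≠ 0 := by omega
      have hz2 : ℓ + 1 ≠ ℓ := by omega
      have hpow : (-1 : K) ^ (ℓ + 1 + (ℓ + 1)) = 1 := by
        apply Even.neg_one_pow
        exact ⟨ℓ + 1, by ring⟩
      simp only [dWt, if_neg hz1, if_neg hz2, ht, Int.toNat_natCast, hpow]
      ring
  have esum : (∑ i ∈ Finset.Icc 1 (ℓ - 1),
      if 0 ≤ (h : ℤ) + (dvec ℓ i).2 then
        dWt ℓ a i (0, (h : ℤ)) * WF (dvec ℓ) (dWt ℓ a) ℓ N ((h : ℤ) + (dvec ℓ i).2).toNat (x - (dvec ℓ i).1)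
      else 0)
      = ∑ i ∈ Finset.Icc 1 (ℓ - 1), ((-1 : K) ^ (ℓ + 1 + i) * a i h / a ℓ h) *
          WF (dvec ℓ) (dWt ℓ a) ℓ N (h + (ℓ - i)) (x - ((ℓ : ℤ) - i)) := by
    apply Finset.sum_congr rfl
    intro i hi
    rw [Finset.mem_Icc] at hi
    have hv : dvec ℓ i = (((ℓ : ℤ) - i), ((ℓ : ℤ) - i)) := by
      simp only [dvec, if_pos (by omega : i < ℓ)]
    rw [hv]
    rw [if_pos (by simp only; omega)]
    have ht : ((h : ℤ) + ((ℓ : ℤ) - i)).toNat = h + (ℓ - i) := by omega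
    have hz1 : i ≠ 0 := by omega
    have hz2 : i ≠ ℓ := by omega
    simp only [dWt, if_neg hz1, if_neg hz2, ht, Int.toNat_natCast]
  rw [e0, el, el1, esum]
  ring

theorem WF_D_vanish {ℓ : ℕ} (hℓ : 1 ≤ ℓ) (a : ℕ → ℕ → K) :
    ∀ (N : ℕ) (h : ℕ) (x : ℤ), x < ((ℓ : ℤ) - 1) * h → WF (dvec ℓ) (dWt ℓ a) ℓ N h x = 0
  | 0, h, x, hx => by
    rw [WF, if_neg]
    rintro ⟨rfl, rfl⟩
    simp at hx
  | (N + 1), h, x, hx => by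
    have h1 : (1 : ℤ) ≤ (ℓ : ℤ) := by exact_mod_cast hℓ
    rw [WF_D_rec hℓ]
    rw [WF_D_vanish hℓ a N (h + ℓ) (x - ℓ) (by push_cast; nlinarith)]
    rw [WF_D_vanish hℓ a N h (x - ℓ) (by push_cast; nlinarith)]
    rw [Finset.sum_eq_zero (fun i hi => by
      rw [Finset.mem_Icc] at hi
      have h2 : ((i : ℤ)) ≤ (ℓ : ℤ) - 1 := by exact_mod_cast (by omega : (i:ℤ) ≤ (ℓ:ℤ) - 1)
      have h3 : (0 : ℤ) ≤ (ℓ : ℤ) - i := by omega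
      rw [WF_D_vanish hℓ a N (h + (ℓ - i)) (x - ((ℓ : ℤ) - i))
        (by push_cast [(by omega : i ≤ ℓ)]; nlinarith)]
      ring)]
    have hdown : (if h = 0 then 0 else (a (ℓ + 1) h / a ℓ h) *
        WF (dvec ℓ) (dWt ℓ a) ℓ N (h - 1) (x - ((ℓ : ℤ) - 1))) = 0 := by
      by_cases hh : h = 0
      · rw [if_pos hh]
      · rw [if_neg hh, WF_D_vanish hℓ a N (h - 1) (x - ((ℓ : ℤ) - 1))
          (by push_cast [(by omega : 1 ≤ h)]; nlinarith), mul_zero]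
    rw [hdown, if_neg (by rintro ⟨rfl, rfl⟩; simp at hx)]
    ring

theorem WF_D_diag {ℓ : ℕ} (hℓ : 1 ≤ ℓ) (a : ℕ → ℕ → K) :
    ∀ (N : ℕ) (h : ℕ), h ≤ N → WF (dvec ℓ) (dWt ℓ a) ℓ N h (((ℓ : ℤ) - 1) * h) =
      ∏ t ∈ Finset.Icc 1 h, (a (ℓ + 1) t / a ℓ t)
  | 0, h, hh => by
    interval_cases h
    rw [WF, if_pos ⟨rfl, by ring⟩]
    simp
  | (N + 1), h, hh => by
    have h1 : (1 : ℤ) ≤ (ℓ : ℤ) := by exact_mod_cast hℓ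
    rw [WF_D_rec hℓ]
    rw [WF_D_vanish hℓ a N (h + ℓ) (((ℓ : ℤ) - 1) * h - ℓ) (by push_cast; nlinarith)]
    rw [WF_D_vanish hℓ a N h (((ℓ : ℤ) - 1) * h - ℓ) (by push_cast; nlinarith)]
    rw [Finset.sum_eq_zero (fun i hi => by
      rw [Finset.mem_Icc] at hi
      have h2 : (1 : ℤ) ≤ ((i : ℤ)) := by exact_mod_cast (by omega : 1 ≤ i)
      have h3 : ((i : ℤ)) ≤ (ℓ : ℤ) - 1 := by exact_mod_cast (by omega : (i:ℤ) ≤ (ℓ:ℤ) - 1)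
      rw [WF_D_vanish hℓ a N (h + (ℓ - i)) (((ℓ : ℤ) - 1) * h - ((ℓ : ℤ) - i))
        (by push_cast [(by omega : i ≤ ℓ)]; nlinarith)]
      ring)]
    by_cases hh0 : h = 0
    · subst hh0
      rw [if_pos ⟨rfl, by ring⟩, if_pos rfl]
      simp
    · rw [if_neg (by rintro ⟨rfl, -⟩; exact hh0 rfl), if_neg hh0]
      have hcast : ((ℓ : ℤ) - 1) * h - ((ℓ : ℤ) - 1) = ((ℓ : ℤ) - 1) * ((h - 1 : ℕ) : ℤ) := by
        push_cast [(by omega : 1 ≤ h)]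
        ring
      rw [hcast, WF_D_diag hℓ a N (h - 1) (by omega)]
      have hprod : ∏ t ∈ Finset.Icc 1 h, (a (ℓ + 1) t / a ℓ t)
          = (∏ t ∈ Finset.Icc 1 (h - 1), (a (ℓ + 1) t / a ℓ t)) * (a (ℓ + 1) h / a ℓ h) := by
        conv_lhs => rw [show h = (h - 1) + 1 by omega]
        rw [Finset.prod_Icc_succ_top (by omega), show (h - 1) + 1 = h by omega]
      rw [hprod]
      ring

theorem Dv_vanish {ℓ : ℕ} (hℓ : 1 ≤ ℓ) (a : ℕ → ℕ → K) (h : ℕ) (x : ℤ)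
    (hx : x < ((ℓ : ℤ) - 1) * h) : Sval (dvec ℓ) (dWt ℓ a) ℓ h x = 0 := by
  rw [Dv_eq_WF hℓ a ((h : ℤ) + 2 * x).toNat h x (Int.self_le_toNat _)]
  exact WF_D_vanish hℓ a _ h x hx

theorem Dv_diag {ℓ : ℕ} (hℓ : 1 ≤ ℓ) (a : ℕ → ℕ → K) (h : ℕ) :
    Sval (dvec ℓ) (dWt ℓ a) ℓ h (((ℓ : ℤ) - 1) * h) =
      ∏ t ∈ Finset.Icc 1 h, (a (ℓ + 1) t / a ℓ t) := by
  have h1 : (1 : ℤ) ≤ (ℓ : ℤ) := by exact_mod_cast hℓ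
  rw [Dv_eq_WF hℓ a (2 * ℓ * h) h _ (by push_cast; nlinarith)]
  exact WF_D_diag hℓ a _ h (by nlinarith)

theorem Dv_rec {ℓ : ℕ} (hℓ : 1 ≤ ℓ) (a : ℕ → ℕ → K) (h : ℕ) (x : ℤ) :
    Sval (dvec ℓ) (dWt ℓ a) ℓ h x =
      (if h = 0 ∧ x = 0 then 1 else 0)
      + ((-1 : K) ^ (ℓ + 1) / a ℓ h) * Sval (dvec ℓ) (dWt ℓ a) ℓ (h + ℓ) (x - ℓ)
      + (∑ i ∈ Finset.Icc 1 (ℓ - 1), ((-1 : K) ^ (ℓ + 1 + i) * a i h / a ℓ h) *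
          Sval (dvec ℓ) (dWt ℓ a) ℓ (h + (ℓ - i)) (x - ((ℓ : ℤ) - i)))
      + (1 / a ℓ h) * Sval (dvec ℓ) (dWt ℓ a) ℓ h (x - ℓ)
      + (if h = 0 then 0 else (a (ℓ + 1) h / a ℓ h) *
          Sval (dvec ℓ) (dWt ℓ a) ℓ (h - 1) (x - ((ℓ : ℤ) - 1))) := by
  set N := ((h : ℤ) + 2 * x).toNat with hN
  have hzN : (h : ℤ) + 2 * x ≤ N := Int.self_le_toNat _
  have h1 : (1 : ℤ) ≤ (ℓ : ℤ) := by exact_mod_cast hℓ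
  rw [Dv_eq_WF hℓ a (N + 1) h x (by push_cast; omega), WF_D_rec hℓ]
  rw [← Dv_eq_WF hℓ a N (h + ℓ) (x - ℓ) (by push_cast; nlinarith)]
  rw [← Dv_eq_WF hℓ a N h (x - ℓ) (by push_cast; nlinarith)]
  have hsum : (∑ i ∈ Finset.Icc 1 (ℓ - 1), ((-1 : K) ^ (ℓ + 1 + i) * a i h / a ℓ h) *
          WF (dvec ℓ) (dWt ℓ a) ℓ N (h + (ℓ - i)) (x - ((ℓ : ℤ) - i)))
      = ∑ i ∈ Finset.Icc 1 (ℓ - 1), ((-1 : K) ^ (ℓ + 1 + i) * a i h / a ℓ h) *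
          Sval (dvec ℓ) (dWt ℓ a) ℓ (h + (ℓ - i)) (x - ((ℓ : ℤ) - i)) := by
    apply Finset.sum_congr rfl
    intro i hi
    rw [Finset.mem_Icc] at hi
    have h2 : (1 : ℤ) ≤ ((i : ℤ)) := by exact_mod_cast (by omega : 1 ≤ i)
    have h3 : ((i : ℤ)) ≤ (ℓ : ℤ) - 1 := by exact_mod_cast (by omega : (i:ℤ) ≤ (ℓ:ℤ) - 1)
    rw [← Dv_eq_WF hℓ a N (h + (ℓ - i)) (x - ((ℓ : ℤ) - i)) (by push_cast [(by omega : i ≤ ℓ)]; nlinarith)]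
  rw [hsum]
  by_cases hh : h = 0
  · subst hh; rfl
  · rw [if_neg hh, if_neg hh,
      ← Dv_eq_WF hℓ a N (h - 1) (x - ((ℓ : ℤ) - 1)) (by push_cast [(by omega : 1 ≤ h)]; nlinarith)]

end LBPaux
namespace LBPaux

open Polynomial LaurentPolynomial

variable {K : Type*} [Field K]

/-- `L (p(x) x^m)`. -/
noncomputable def lamF (L : LaurentPolynomial K →ₗ[K] K) (p : Polynomial K) (m : ℤ) : K :=
  L (Polynomial.toLaurent p * LaurentPolynomial.T m)

theorem lamF_add (L : LaurentPolynomial K →ₗ[K] K) (p q : Polynomial K) (m : ℤ) :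
    lamF L (p + q) m = lamF L p m + lamF L q m := by
  simp [lamF, map_add, add_mul]

theorem lamF_neg (L : LaurentPolynomial K →ₗ[K] K) (p : Polynomial K) (m : ℤ) :
    lamF L (-p) m = - lamF L p m := by
  simp [lamF, map_neg, neg_mul]

theorem lamF_sub (L : LaurentPolynomial K →ₗ[K] K) (p q : Polynomial K) (m : ℤ) :
    lamF L (p - q) m = lamF L p m - lamF L q m := by
  simp [lamF, map_sub, sub_mul]

theorem lamF_zero (L : LaurentPolynomial K →ₗ[K] K) (m : ℤ) : lamF L 0 m = 0 := by
  simp [lamF]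

theorem lamF_sum (L : LaurentPolynomial K →ₗ[K] K) {α : Type*} (s : Finset α)
    (f : α → Polynomial K) (m : ℤ) :
    lamF L (∑ i ∈ s, f i) m = ∑ i ∈ s, lamF L (f i) m := by
  classical
  induction s using Finset.induction with
  | empty => simp [lamF_zero]
  | insert _ _ hni ih => rw [Finset.sum_insert hni, lamF_add, ih, Finset.sum_insert hni]

theorem lamF_C_mul (L : LaurentPolynomial K →ₗ[K] K) (c : K) (p : Polynomial K) (m : ℤ) :
    lamF L (Polynomial.C c * p) m = c * lamF L p m := by
  have h1 : Polynomial.toLaurent (Polynomial.C c * p) = LaurentPolynomial.C c * Polynomial.toLaurent p :=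
    Polynomial.toLaurent_C_mul_eq c p
  rw [lamF, h1, mul_assoc, LaurentPolynomial.C_eq_algebraMap, ← Algebra.smul_def, map_smul,
    smul_eq_mul, lamF]

theorem lamF_X_pow_mul (L : LaurentPolynomial K →ₗ[K] K) (j : ℕ) (p : Polynomial K) (m : ℤ) :
    lamF L (Polynomial.X ^ j * p) m = lamF L p (m + j) := by
  have h1 : Polynomial.toLaurent (Polynomial.X ^ j * p) = LaurentPolynomial.T (j : ℤ) * Polynomial.toLaurent p := by
    rw [map_mul, Polynomial.toLaurent_X_pow]
  rw [lamF, h1, LaurentPolynomial.T_mul, mul_assoc, ← LaurentPolynomial.T_add, lamF, add_comm]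

theorem lamF_X_pow (L : LaurentPolynomial K →ₗ[K] K) (j : ℕ) (m : ℤ) :
    lamF L (Polynomial.X ^ j) m = L (LaurentPolynomial.T ((j : ℤ) + m)) := by
  rw [lamF, Polynomial.toLaurent_X_pow, ← LaurentPolynomial.T_add]

/-- helper for signs -/
theorem negpow_sub (i n : ℕ) (hin : i ≤ n) : (-1 : K) ^ (n - i) = (-1) ^ n * (-1) ^ i := by
  have h2 : ((-1 : K)) ^ i * (-1) ^ i = 1 := by
    rw [← pow_add]
    exact Even.neg_one_pow ⟨i, by ring⟩
  calc ((-1 : K)) ^ (n - i) = (-1) ^ (n - i) * ((-1) ^ i * (-1) ^ i) := by rw [h2, mul_one]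
    _ = (-1) ^ ((n - i) + i) * (-1) ^ i := by rw [pow_add]; ring
    _ = (-1) ^ n * (-1) ^ i := by rw [Nat.sub_add_cancel hin]

/-- The moments, expressed through the path sums. -/
theorem wB_eq {ℓ : ℕ} (hℓ : 1 ≤ ℓ) (a : ℕ → ℕ → K) (m : ℤ) :
    wB ℓ a m = Sval (svec ℓ) (aWt a) ℓ ((m % (ℓ : ℤ)).toNat) m := by
  have hnn : 0 ≤ m % (ℓ : ℤ) := Int.emod_nonneg m (by exact_mod_cast (by omega : (ℓ:ℕ) ≠ 0))
  have hcast : (((m % (ℓ : ℤ)).toNat : ℤ)) = m % (ℓ : ℤ) := Int.toNat_of_nonneg hnn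
  rw [wB, Sval]
  have hset : BSet ℓ m = PathSet (svec ℓ) ℓ ((0 : ℤ), m % (ℓ : ℤ)) ((m : ℤ), (0 : ℤ)) := by
    ext ω
    constructor
    · rintro ⟨⟨h1, h2⟩, h3⟩; exact ⟨h1, h2, h3⟩
    · rintro ⟨h1, h2, h3⟩; exact ⟨⟨h1, h2⟩, h3⟩
  rw [hset, hcast]

theorem wD_eq {ℓ : ℕ} (hℓ : 1 ≤ ℓ) (a : ℕ → ℕ → K) (m : ℤ) :
    wD ℓ a m = Sval (dvec ℓ) (dWt ℓ a) ℓ (((-m) % (ℓ : ℤ)).toNat) m := by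
  have hnn : 0 ≤ (-m) % (ℓ : ℤ) := Int.emod_nonneg _ (by exact_mod_cast (by omega : (ℓ:ℕ) ≠ 0))
  have hcast : ((((-m) % (ℓ : ℤ)).toNat : ℤ)) = (-m) % (ℓ : ℤ) := Int.toNat_of_nonneg hnn
  rw [wD, Sval]
  have hset : DSet ℓ m = PathSet (dvec ℓ) ℓ ((0 : ℤ), (-m) % (ℓ : ℤ)) ((m : ℤ), (0 : ℤ)) := by
    ext ω
    constructor
    · rintro ⟨⟨h1, h2⟩, h3⟩; exact ⟨h1, h2, h3⟩
    · rintro ⟨h1, h2, h3⟩; exact ⟨⟨h1, h2⟩, h3⟩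
  rw [hset, hcast]

end LBPaux
namespace LBPaux

open Polynomial LaurentPolynomial

variable {K : Type*} [Field K]

theorem master {ℓ : ℕ} (hℓ : 1 ≤ ℓ) (a : ℕ → ℕ → K)
    (haℓ : ∀ j : ℕ, a ℓ j ≠ 0)
    (P : ℕ → Polynomial K)
    (hinit : ∀ n : ℕ, n < ℓ → P n = Polynomial.X ^ n)
    (hrec : SatisfiesRec ℓ a P)
    (L : LaurentPolynomial K →ₗ[K] K)
    (hL : ∀ n : ℤ, L (LaurentPolynomial.T n) = combMoment ℓ a n) :
    ∀ n : ℕ, ∀ k : ℤ, lamF L (P n) (k * ℓ) =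
      a ℓ 0 * Sval (svec ℓ) (aWt a) ℓ n ((k - 1) * ℓ + n)
      + (-1 : K) ^ n * Sval (dvec ℓ) (dWt ℓ a) ℓ n (-(k * ℓ) - n) := by
  intro n
  induction n using Nat.strong_induction_on with
  | _ n IH =>
  intro k
  have h1 : (1 : ℤ) ≤ (ℓ : ℤ) := by exact_mod_cast hℓ
  by_cases hn : n < ℓ
  · -- base case
    have hni : ((n : ℤ)) < (ℓ : ℤ) := by exact_mod_cast hn
    rw [hinit n hn, lamF_X_pow, hL]
    rcases le_or_gt 1 k with hk | hk
    · -- k ≥ 1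
      have hkl : (ℓ : ℤ) ≤ k * ℓ := by nlinarith
      rw [combMoment, if_pos (by omega : (ℓ : ℤ) ≤ (n : ℤ) + k * ℓ)]
      rw [wB_eq hℓ]
      have hmod : ((n : ℤ) + k * ℓ - ℓ) % (ℓ : ℤ) = (n : ℤ) := by
        rw [show (n : ℤ) + k * ℓ - ℓ = n + (ℓ : ℤ) * (k - 1) by ring,
          Int.add_mul_emod_self_left, Int.emod_eq_of_lt (by positivity) hni]
      rw [hmod]
      have htn : ((n : ℤ)).toNat = n := Int.toNat_natCast n
      rw [htn]
      rw [show (n : ℤ) + k * ℓ - ℓ = (k - 1) * ℓ + n by ring]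
      rw [Dv_vanish hℓ a n (-(k * ℓ) - n) (by nlinarith [Int.natCast_nonneg n])]
      ring
    · rcases eq_or_lt_of_le (by omega : k ≤ 0) with hk0 | hk0
      · -- k = 0
        subst hk0
        by_cases hn0 : n = 0
        · subst hn0
          rw [combMoment, if_neg (by omega), if_neg (by omega)]
          have hD00 : Sval (dvec ℓ) (dWt ℓ a) ℓ 0 0 = 1 := by
            have := Dv_diag hℓ a 0
            simpa using this
          have e1 : ((0:ℕ):ℤ) + 0 * (ℓ:ℤ) = 0 := by norm_num
          rw [e1]
          have e2 : wD ℓ a (-0 : ℤ) = 1 := by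
            rw [wD_eq hℓ]
            rw [show ((-(-0:ℤ)) % (ℓ:ℤ)) = 0 by norm_num]
            rw [show ((0:ℤ).toNat) = 0 from rfl, show (-0 : ℤ) = 0 by norm_num]
            exact hD00
          rw [e2]
          rw [Sv_vanish hℓ a 0 ((0 - 1) * ℓ + ((0:ℕ):ℤ)) (by push_cast; nlinarith)]
          rw [show (-(0 * (ℓ:ℤ)) - ((0:ℕ):ℤ)) = 0 by norm_num, hD00]
          norm_num
        · -- 1 ≤ n < ℓ
          have hn1 : (1:ℤ) ≤ (n:ℤ) := by exact_mod_cast (by omega : 1 ≤ n)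
          rw [combMoment, if_neg (by omega), if_pos (by omega)]
          rw [Sv_vanish hℓ a n ((0 - 1) * ℓ + (n:ℤ)) (by nlinarith)]
          rw [Dv_vanish hℓ a n (-(0 * (ℓ:ℤ)) - n) (by nlinarith)]
          ring
      · -- k ≤ -1
        have hk1 : k ≤ -1 := by omega
        have hm : (n : ℤ) + k * ℓ ≤ -1 + ℓ - ℓ := by nlinarith
        rw [combMoment, if_neg (by omega), if_neg (by omega)]
        rw [wD_eq hℓ]
        have hmod : ((n : ℤ) + k * ℓ) % (ℓ : ℤ) = (n : ℤ) := by
          rw [show (n : ℤ) + k * ℓ = n + (ℓ : ℤ) * k by ring,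
            Int.add_mul_emod_self_left, Int.emod_eq_of_lt (by positivity) hni]
        rw [neg_neg, hmod, Int.toNat_natCast]
        rw [show -((n : ℤ) + k * ℓ) = -(k * ℓ) - n by ring]
        rw [Sv_vanish hℓ a n ((k - 1) * ℓ + (n:ℤ)) (by nlinarith)]
        ring
  · -- inductive step
    push_neg at hn
    obtain ⟨h, rfl⟩ : ∃ h, n = h + ℓ := ⟨n - ℓ, by omega⟩
    have hrecn := hrec (h + ℓ) (by omega)
    simp only [Nat.add_sub_cancel] at hrecn
    -- canonical abbreviations (not `set`, to keep syntactic match)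
    have hSrec := Sv_rec hℓ a h (k * ℓ + (h : ℤ))
    have hDrec := Dv_rec hℓ a h (-(k * ℓ) - (h : ℤ))
    -- multiplied version of hDrec
    have hDrec' : a ℓ h * Sval (dvec ℓ) (dWt ℓ a) ℓ h (-(k * ℓ) - (h : ℤ)) =
        (if h = 0 ∧ -(k * ℓ) - (h : ℤ) = 0 then a ℓ h else 0)
        + (-1 : K) ^ (ℓ + 1) * Sval (dvec ℓ) (dWt ℓ a) ℓ (h + ℓ) (-(k * ℓ) - (h : ℤ) - ℓ)
        + (∑ i ∈ Finset.Icc 1 (ℓ - 1), ((-1 : K) ^ (ℓ + 1 + i) * a i h) *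
            Sval (dvec ℓ) (dWt ℓ a) ℓ (h + (ℓ - i)) (-(k * ℓ) - (h : ℤ) - ((ℓ : ℤ) - i)))
        + Sval (dvec ℓ) (dWt ℓ a) ℓ h (-(k * ℓ) - (h : ℤ) - ℓ)
        + (if h = 0 then 0 else a (ℓ + 1) h *
            Sval (dvec ℓ) (dWt ℓ a) ℓ (h - 1) (-(k * ℓ) - (h : ℤ) - ((ℓ : ℤ) - 1))) := by
      rw [hDrec]
      rw [mul_add, mul_add, mul_add, mul_add, Finset.mul_sum]
      congr 1
      congr 1
      congr 1
      congr 1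
      · split_ifs <;> ring
      · field_simp [haℓ h]
      · apply Finset.sum_congr rfl
        intro i hi
        field_simp [haℓ h]
        try ring
      · field_simp [haℓ h]
      · split_ifs with hh
        · ring
        · field_simp [haℓ h]
          try ring
    -- the IH for the single children
    have hTh : lamF L (P h) (k * ℓ + (ℓ : ℤ)) =
        a ℓ 0 * Sval (svec ℓ) (aWt a) ℓ h (k * ℓ + (h : ℤ))
        + (-1 : K) ^ h * Sval (dvec ℓ) (dWt ℓ a) ℓ h (-(k * ℓ) - (h : ℤ) - ℓ) := by
      rw [show (k * (ℓ:ℤ) + (ℓ:ℤ)) = (k + 1) * ℓ by ring, IH h (by omega) (k + 1),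
        show ((k + 1) - 1) * (ℓ:ℤ) + (h:ℤ) = k * ℓ + h by ring,
        show -((k + 1) * (ℓ:ℤ)) - (h:ℤ) = -(k * ℓ) - (h:ℤ) - ℓ by ring]
    have hTh2 : lamF L (P h) (k * ℓ) =
        a ℓ 0 * Sval (svec ℓ) (aWt a) ℓ h (k * ℓ + (h : ℤ) - ℓ)
        + (-1 : K) ^ h * Sval (dvec ℓ) (dWt ℓ a) ℓ h (-(k * ℓ) - (h : ℤ)) := by
      rw [IH h (by omega) k,
        show (k - 1) * (ℓ:ℤ) + (h:ℤ) = k * ℓ + h - ℓ by ring]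
    -- the sum of children
    have hSum : (∑ i ∈ Finset.Icc 1 (ℓ - 1), a i h * lamF L (P (h + ℓ - i)) (k * ℓ)) =
        a ℓ 0 * (∑ i ∈ Finset.Icc 1 (ℓ - 1), a i h *
            Sval (svec ℓ) (aWt a) ℓ (h + (ℓ - i)) (k * ℓ + (h : ℤ) - i))
        + (-1 : K) ^ (h + 1) * (∑ i ∈ Finset.Icc 1 (ℓ - 1), ((-1 : K) ^ (ℓ + 1 + i) * a i h) *
            Sval (dvec ℓ) (dWt ℓ a) ℓ (h + (ℓ - i)) (-(k * ℓ) - (h : ℤ) - ((ℓ : ℤ) - i))) := by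
      rw [Finset.mul_sum, Finset.mul_sum, ← Finset.sum_add_distrib]
      apply Finset.sum_congr rfl
      intro i hi
      rw [Finset.mem_Icc] at hi
      have hie : h + ℓ - i = h + (ℓ - i) := by omega
      have hterm := IH (h + (ℓ - i)) (by omega) k
      rw [hie, hterm,
        show ((k:ℤ) - 1) * ℓ + ((h + (ℓ - i) : ℕ) : ℤ) = k * ℓ + (h:ℤ) - i by
          push_cast [(by omega : i ≤ ℓ)]; ring,
        show -((k:ℤ) * ℓ) - ((h + (ℓ - i) : ℕ) : ℤ) = -(k * ℓ) - (h : ℤ) - ((ℓ:ℤ) - i) by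
          push_cast [(by omega : i ≤ ℓ)]; ring]
      have hsgn : ((-1 : K)) ^ (h + (ℓ - i)) = (-1) ^ (h + ℓ) * (-1) ^ i := by
        rw [show h + (ℓ - i) = (h + ℓ) - i by omega, negpow_sub i (h + ℓ) (by omega)]
      rw [hsgn]
      ring
    by_cases h0 : h = 0
    · -- h = 0  (n = ℓ)
      subst h0
      have hPoly : P (0 + ℓ) =
          -(∑ i ∈ Finset.Icc 1 (ℓ - 1), Polynomial.C (a i 0) * P (0 + ℓ - i))
          + Polynomial.X ^ ℓ * P 0 - Polynomial.C (a ℓ 0) * P 0 := by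
        rw [hrecn, if_pos (by omega)]
        ring
      rw [hPoly, lamF_sub, lamF_add, lamF_neg, lamF_sum, lamF_C_mul, lamF_X_pow_mul]
      have hsum_cmul : (∑ i ∈ Finset.Icc 1 (ℓ - 1),
          lamF L (Polynomial.C (a i 0) * P (0 + ℓ - i)) (k * ℓ)) =
          ∑ i ∈ Finset.Icc 1 (ℓ - 1), a i 0 * lamF L (P (0 + ℓ - i)) (k * ℓ) := by
        apply Finset.sum_congr rfl
        intro i hi
        rw [lamF_C_mul]
      rw [hsum_cmul, hSum, hTh, hTh2]
      -- normalize the goal's LHS arguments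
      rw [show ((k:ℤ) - 1) * ℓ + ((0 + ℓ : ℕ) : ℤ) = k * ℓ + ((0:ℕ):ℤ) by push_cast; ring,
        show -((k:ℤ) * ℓ) - ((0 + ℓ : ℕ) : ℤ) = -(k * ℓ) - ((0:ℕ):ℤ) - (ℓ:ℤ) by push_cast; ring,
        show ((0 + ℓ : ℕ)) = 0 + ℓ from rfl]
      -- resolve the `if`s in the recursions
      rw [if_pos rfl] at hSrec hDrec'
      by_cases hk0 : k = 0
      · subst hk0
        rw [if_pos (by constructor; rfl; push_cast; ring)] at hSrec
        rw [if_pos (by constructor; rfl; push_cast; ring)] at hDrec'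
        linear_combination (a ℓ 0) * hSrec - hDrec'
      · have hx0 : ¬ ((k:ℤ) * ℓ + ((0:ℕ):ℤ) = 0) := by
          push_cast
          intro hcon
          apply hk0
          have : (k:ℤ) * ℓ = 0 := by omega
          rcases mul_eq_zero.1 this with h' | h'
          · exact h'
          · omega
        rw [if_neg (by rintro ⟨-, hcc⟩; exact hx0 hcc)] at hSrec
        rw [if_neg (by rintro ⟨-, hcc⟩; apply hx0; push_cast; omega)] at hDrec'
        linear_combination (a ℓ 0) * hSrec - hDrec'
    · -- h ≠ 0
      have hTd : lamF L (P (h - 1)) (k * ℓ + (ℓ : ℤ)) =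
          a ℓ 0 * Sval (svec ℓ) (aWt a) ℓ (h - 1) (k * ℓ + (h : ℤ) - 1)
          + (-1 : K) ^ h * (-1 : K) * Sval (dvec ℓ) (dWt ℓ a) ℓ (h - 1)
              (-(k * ℓ) - (h : ℤ) - ((ℓ : ℤ) - 1)) := by
        rw [show (k * (ℓ:ℤ) + (ℓ:ℤ)) = (k + 1) * ℓ by ring, IH (h - 1) (by omega) (k + 1),
          show ((k + 1) - 1) * (ℓ:ℤ) + ((h - 1 : ℕ) : ℤ) = k * ℓ + (h:ℤ) - 1 by
            push_cast [(by omega : 1 ≤ h)]; ring,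
          show -((k + 1) * (ℓ:ℤ)) - ((h - 1 : ℕ) : ℤ) = -(k * ℓ) - (h:ℤ) - ((ℓ:ℤ) - 1) by
            push_cast [(by omega : 1 ≤ h)]; ring,
          show ((-1 : K)) ^ (h - 1) = (-1 : K) ^ h * (-1 : K) by
            rw [negpow_sub 1 h (by omega)]; ring]
      have hPoly : P (h + ℓ) =
          -(∑ i ∈ Finset.Icc 1 (ℓ - 1), Polynomial.C (a i h) * P (h + ℓ - i))
          + Polynomial.X ^ ℓ * P h - Polynomial.C (a ℓ h) * P h
          - Polynomial.C (a (ℓ + 1) h) * (Polynomial.X ^ ℓ * P (h - 1)) := by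
        rw [hrecn, if_neg (by omega)]
        ring
      rw [hPoly]
      simp only [lamF_sub, lamF_add, lamF_neg, lamF_sum, lamF_C_mul, lamF_X_pow_mul]
      rw [hSum, hTh, hTh2, hTd]
      rw [show ((k:ℤ) - 1) * ℓ + ((h + ℓ : ℕ) : ℤ) = k * ℓ + ((h:ℕ):ℤ) by push_cast; ring,
        show -((k:ℤ) * ℓ) - ((h + ℓ : ℕ) : ℤ) = -(k * ℓ) - ((h:ℕ):ℤ) - (ℓ:ℤ) by push_cast; ring]
      rw [if_neg (by rintro ⟨hcc, -⟩; exact h0 hcc)] at hSrec hDrec'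
      rw [if_neg h0] at hSrec hDrec'
      linear_combination (a ℓ 0) * hSrec - ((-1 : K) ^ h) * hDrec'


end LBPaux

/-- For the functional `L` given by the combinatorial moments and the
primitive `ℓ`-LBPs `P`: `L (P n · x^{-nℓ}) = (-1)^n ∏_{i=1}^n a_{ℓ+1,i}/a_{ℓ,i}`
and `L (P n · x^ℓ) = a ℓ 0 · ∏_{i=1}^n a_{ℓ+1,i}`; in particular
`L (P n · x^{-nℓ}) ≠ 0`. -/
theorem diagonal_values_of_functional {K : Type*} [Field K]
    (ℓ : ℕ) (hℓ : 1 ≤ ℓ) (a : ℕ → ℕ → K)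
    (haℓ : ∀ j : ℕ, a ℓ j ≠ 0) (haℓ1 : ∀ j : ℕ, a (ℓ + 1) j ≠ 0)
    (P : ℕ → Polynomial K)
    (hinit : ∀ n : ℕ, n < ℓ → P n = Polynomial.X ^ n)
    (hrec : SatisfiesRec ℓ a P)
    (L : LaurentPolynomial K →ₗ[K] K)
    (hL : ∀ n : ℤ, L (LaurentPolynomial.T n) = combMoment ℓ a n) :
    ∀ n : ℕ,
      L (Polynomial.toLaurent (P n) * LaurentPolynomial.T (-(n : ℤ) * ℓ)) =
        (-1 : K) ^ n * ∏ i ∈ Finset.Icc 1 n, a (ℓ + 1) i / a ℓ i ∧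
      L (Polynomial.toLaurent (P n) * LaurentPolynomial.T (ℓ : ℤ)) =
        a ℓ 0 * ∏ i ∈ Finset.Icc 1 n, a (ℓ + 1) i ∧
      L (Polynomial.toLaurent (P n) * LaurentPolynomial.T (-(n : ℤ) * ℓ)) ≠ 0 := by
  intro n
  have hmaster := LBPaux.master hℓ a haℓ P hinit hrec L hL n
  have h1 : (1 : ℤ) ≤ (ℓ : ℤ) := by exact_mod_cast hℓ
  have hn0 : (0 : ℤ) ≤ (n : ℤ) := Int.natCast_nonneg n
  have hval1 : L (Polynomial.toLaurent (P n) * LaurentPolynomial.T (-(n : ℤ) * ℓ)) =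
      (-1 : K) ^ n * ∏ i ∈ Finset.Icc 1 n, a (ℓ + 1) i / a ℓ i := by
    have hm := hmaster (-(n : ℤ))
    rw [LBPaux.lamF] at hm
    rw [hm]
    rw [LBPaux.Sv_vanish hℓ a n ((-(n : ℤ) - 1) * ℓ + (n : ℤ)) (by nlinarith)]
    rw [show (-(-(n : ℤ) * ℓ) - (n : ℤ)) = ((ℓ : ℤ) - 1) * (n : ℤ) by ring]
    rw [LBPaux.Dv_diag hℓ a n]
    ring
  refine ⟨hval1, ?_, ?_⟩
  · have hm := hmaster 1
    rw [LBPaux.lamF] at hm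
    rw [show ((1 : ℤ) * (ℓ : ℤ)) = (ℓ : ℤ) by ring] at hm
    rw [hm]
    rw [show ((1 : ℤ) - 1) * (ℓ : ℤ) + (n : ℤ) = (n : ℤ) by ring]
    rw [LBPaux.Sv_diag hℓ a n]
    rw [LBPaux.Dv_vanish hℓ a n (-(ℓ : ℤ) - (n : ℤ)) (by nlinarith)]
    ring
  · rw [hval1]
    apply mul_ne_zero
    · exact pow_ne_zero _ (neg_ne_zero.2 one_ne_zero)
    · rw [Finset.prod_ne_zero_iff]
      exact fun i _ => div_ne_zero (haℓ1 i) (haℓ i)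
end

section
/- For every integer n ≥ ℓ, the n-th ℓ-Narayana polynomial N_n is divisible in ℤ[a_1,…,a_{ℓ+1}] by the polynomial ∑_{i=0}^{ℓ} a_i·a_{ℓ+1}^{ℓ−i}, where a_0 := 1. -/
open scoped BigOperators

/-- The `n`-th `ℓ`-Narayana polynomial
`N n = ∑_{ω ∈ B n} ∏_{i=1}^{ℓ+1} a_i^{m_i(ω)} ∈ ℤ[a_1, …, a_{ℓ+1}]`,
where `m_i(ω)` is the number of steps `a_i` in `ω` (the variable `a_i`
is `MvPolynomial.X i`). -/
noncomputable def NarayanaPoly (ℓ n : ℕ) : MvPolynomial ℕ ℤ :=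
  ∑ᶠ ω ∈ BSet ℓ (n : ℤ),
    ∏ i ∈ Finset.Icc 1 (ℓ + 1), (MvPolynomial.X i : MvPolynomial ℕ ℤ) ^ ω.count i

/-- `∑_{i=0}^{ℓ} a_i · a_{ℓ+1}^{ℓ-i}` with `a_0 := 1`. -/
noncomputable def NarayanaFactor (ℓ : ℕ) : MvPolynomial ℕ ℤ :=
  ∑ i ∈ Finset.range (ℓ + 1),
    (if i = 0 then 1 else MvPolynomial.X i) * (MvPolynomial.X (ℓ + 1)) ^ (ℓ - i)

namespace NaraAux

def NN (ℓ : ℕ) (p : ℤ × ℤ) (l : List ℕ) : Prop := ∀ q ∈ verts (svec ℓ) p l, 0 ≤ q.2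

lemma endPt_nil (vec : ℕ → ℤ × ℤ) (p : ℤ × ℤ) : endPt vec p [] = p := rfl

lemma endPt_cons (vec : ℕ → ℤ × ℤ) (p : ℤ × ℤ) (s : ℕ) (t : List ℕ) :
    endPt vec p (s :: t) = endPt vec (p + vec s) t := rfl

lemma verts_nil (vec : ℕ → ℤ × ℤ) (p : ℤ × ℤ) : verts vec p [] = [p] := rfl

lemma verts_cons (vec : ℕ → ℤ × ℤ) (p : ℤ × ℤ) (s : ℕ) (t : List ℕ) :
    verts vec p (s :: t) = p :: verts vec (p + vec s) t := rfl

lemma endPt_append (vec : ℕ → ℤ × ℤ) (l₁ l₂ : List ℕ) :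
    ∀ p, endPt vec p (l₁ ++ l₂) = endPt vec (endPt vec p l₁) l₂ := by
  induction l₁ with
  | nil => intro p; rfl
  | cons s t ih => intro p; simp only [List.cons_append, endPt_cons]; exact ih _

lemma NN_nil {ℓ : ℕ} {p : ℤ × ℤ} : NN ℓ p [] ↔ 0 ≤ p.2 := by
  simp [NN, verts_nil]

lemma NN_cons {ℓ : ℕ} {p : ℤ × ℤ} {s : ℕ} {t : List ℕ} :
    NN ℓ p (s :: t) ↔ 0 ≤ p.2 ∧ NN ℓ (p + svec ℓ s) t := by
  unfold NN
  rw [verts_cons]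
  simp [List.forall_mem_cons]

lemma NN.start {ℓ : ℕ} {p : ℤ × ℤ} {l : List ℕ} (h : NN ℓ p l) : 0 ≤ p.2 := by
  cases l with
  | nil => exact h p (by simp [verts_nil])
  | cons s t => exact h p (by simp [verts_cons])

lemma svec_le {ℓ i : ℕ} (h : i ≤ ℓ) : svec ℓ i = ((i : ℤ), (ℓ : ℤ) - i) := if_pos h

lemma svec_D {ℓ : ℕ} : svec ℓ (ℓ + 1) = (1, -1) := if_neg (by omega)

lemma endPt_replicate {ℓ : ℕ} (m : ℕ) :
    ∀ p : ℤ × ℤ, endPt (svec ℓ) p (List.replicate m (ℓ + 1)) = (p.1 + m, p.2 - m) := by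
  induction m with
  | zero => intro p; simp [endPt_nil]
  | succ m ih =>
    intro p
    rw [List.replicate_succ, endPt_cons, ih, svec_D]
    simp only [Prod.fst_add, Prod.snd_add, Prod.ext_iff]
    push_cast
    constructor <;> ring

lemma NN_replicate_append {ℓ : ℕ} (l : List ℕ) :
    ∀ (m : ℕ) (p : ℤ × ℤ), NN ℓ p (List.replicate m (ℓ + 1) ++ l) ↔
      ((m : ℤ) ≤ p.2 ∧ NN ℓ (p.1 + m, p.2 - m) l) := by
  intro m
  induction m with
  | zero =>
    intro p
    simp only [List.replicate_zero, List.nil_append, Nat.cast_zero]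
    constructor
    · intro h
      refine ⟨h.start, ?_⟩
      have : (p.1 + (0:ℤ), p.2 - 0) = p := by simp
      rw [this]; exact h
    · rintro ⟨_, h⟩
      have : (p.1 + (0:ℤ), p.2 - 0) = p := by simp
      rwa [this] at h
  | succ m ih =>
    intro p
    rw [List.replicate_succ, List.cons_append, NN_cons, svec_D, ih]
    have hpt : ((p + ((1:ℤ), (-1:ℤ))).1 + (m:ℤ), (p + ((1:ℤ),(-1:ℤ))).2 - (m:ℤ))
        = (p.1 + ((m+1 : ℕ) : ℤ), p.2 - ((m+1 : ℕ) : ℤ)) := by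
      simp only [Prod.fst_add, Prod.snd_add, Prod.ext_iff]
      push_cast
      constructor <;> ring
    rw [hpt]
    have hsnd : (p + ((1:ℤ),(-1:ℤ))).2 = p.2 - 1 := by
      simp [Prod.snd_add]; ring
    rw [hsnd]
    push_cast
    constructor
    · rintro ⟨h0, h1, h2⟩; exact ⟨by omega, h2⟩
    · rintro ⟨h1, h2⟩; exact ⟨by omega, by omega, h2⟩

end NaraAux

namespace NaraAux

def flat (ℓ : ℕ) (s : ℕ) : List ℕ :=
  if s ≤ ℓ + 1 then [s] else (s - (ℓ + 2)) :: List.replicate (ℓ - (s - (ℓ + 2))) (ℓ + 1)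

def flatten (ℓ : ℕ) (τ : List ℕ) : List ℕ := τ.flatMap (flat ℓ)

def contract (ℓ : ℕ) (τ : List ℕ) : List ℕ := τ.map (fun s => if s ≤ ℓ + 1 then s else ℓ)

def Valid (ℓ : ℕ) (τ : List ℕ) : Prop :=
  ∀ s ∈ τ, (s ≤ ℓ + 1 ∧ s ≠ ℓ) ∨ (ℓ + 2 ≤ s ∧ s ≤ 2 * ℓ + 1)

noncomputable def G (ℓ : ℕ) : MvPolynomial ℕ ℤ :=
  ∑ i ∈ Finset.range ℓ,
    (if i = 0 then 1 else MvPolynomial.X i) * (MvPolynomial.X (ℓ + 1) : MvPolynomial ℕ ℤ) ^ (ℓ - i)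

noncomputable def U (ℓ : ℕ) (s : ℕ) : MvPolynomial ℕ ℤ :=
  if s ≤ ℓ + 1 then (if s = 0 then 1 else if s = ℓ then -(G ℓ) else MvPolynomial.X s)
  else -((if s = ℓ + 2 then 1 else MvPolynomial.X (s - (ℓ + 2)))
        * (MvPolynomial.X (ℓ + 1) : MvPolynomial ℕ ℤ) ^ (ℓ - (s - (ℓ + 2))))

noncomputable def W (ℓ : ℕ) (τ : List ℕ) : MvPolynomial ℕ ℤ := (τ.map (U ℓ)).prod

def inv (ℓ : ℕ) : List ℕ → List ℕ
  | [] => []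
  | s :: t =>
    if ℓ + 2 ≤ s then
      (s - (ℓ + 2)) :: (List.replicate (ℓ - (s - (ℓ + 2))) (ℓ + 1) ++ t)
    else if s < ℓ ∧ t.take (ℓ - s) = List.replicate (ℓ - s) (ℓ + 1) then
      (ℓ + 2 + s) :: t.drop (ℓ - s)
    else s :: inv ℓ t

def fiber (ℓ : ℕ) : List ℕ → Finset (List ℕ)
  | [] => {[]}
  | s :: t =>
    if s = ℓ then (Finset.range ℓ).biUnion (fun i => (fiber ℓ t).image (fun τ => (ℓ + 2 + i) :: τ))
    else (fiber ℓ t).image (fun τ => s :: τ)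

lemma contract_nil (ℓ : ℕ) : contract ℓ [] = [] := rfl

lemma contract_cons (ℓ s : ℕ) (t : List ℕ) :
    contract ℓ (s :: t) = (if s ≤ ℓ + 1 then s else ℓ) :: contract ℓ t := rfl

lemma flatten_nil (ℓ : ℕ) : flatten ℓ [] = [] := rfl

lemma flatten_cons (ℓ s : ℕ) (t : List ℕ) :
    flatten ℓ (s :: t) = flat ℓ s ++ flatten ℓ t := by
  simp [flatten]

lemma flatten_append (ℓ : ℕ) (l₁ l₂ : List ℕ) :
    flatten ℓ (l₁ ++ l₂) = flatten ℓ l₁ ++ flatten ℓ l₂ := by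
  simp [flatten]

lemma flatten_replicate_D (ℓ m : ℕ) :
    flatten ℓ (List.replicate m (ℓ + 1)) = List.replicate m (ℓ + 1) := by
  induction m with
  | zero => rfl
  | succ m ih =>
    rw [List.replicate_succ, flatten_cons, ih, flat, if_pos (by omega)]
    rfl

lemma valid_cons {ℓ s : ℕ} {t : List ℕ} :
    Valid ℓ (s :: t) ↔ ((s ≤ ℓ + 1 ∧ s ≠ ℓ) ∨ (ℓ + 2 ≤ s ∧ s ≤ 2 * ℓ + 1)) ∧ Valid ℓ t := by
  simp [Valid, List.forall_mem_cons]

lemma W_nil (ℓ : ℕ) : W ℓ [] = 1 := rfl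

lemma W_cons (ℓ s : ℕ) (t : List ℕ) : W ℓ (s :: t) = U ℓ s * W ℓ t := by
  simp [W]

lemma W_append (ℓ : ℕ) (l₁ l₂ : List ℕ) : W ℓ (l₁ ++ l₂) = W ℓ l₁ * W ℓ l₂ := by
  simp [W]

lemma W_replicate_D (ℓ m : ℕ) :
    W ℓ (List.replicate m (ℓ + 1)) = (MvPolynomial.X (ℓ + 1) : MvPolynomial ℕ ℤ) ^ m := by
  have hU : U ℓ (ℓ + 1) = MvPolynomial.X (ℓ + 1) := by
    rw [U, if_pos (le_refl _), if_neg (by omega), if_neg (by omega)]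
  simp [W, List.map_replicate, List.prod_replicate, hU]

-- path geometry for flatten vs contract
lemma endPt_flat {ℓ s : ℕ} (hs : (s ≤ ℓ + 1 ∧ s ≠ ℓ) ∨ (ℓ + 2 ≤ s ∧ s ≤ 2 * ℓ + 1)) (p : ℤ × ℤ) :
    endPt (svec ℓ) p (flat ℓ s) = p + svec ℓ (if s ≤ ℓ + 1 then s else ℓ) := by
  rcases hs with ⟨h1, _⟩ | ⟨h1, h2⟩
  · rw [flat, if_pos h1, if_pos h1]; rfl
  · have hs' : ¬ s ≤ ℓ + 1 := by omega
    rw [flat, if_neg hs', if_neg hs']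
    have hi : s - (ℓ + 2) ≤ ℓ := by omega
    rw [endPt_cons, endPt_replicate, svec_le hi, svec_le (le_refl ℓ)]
    have hcast : ((ℓ - (s - (ℓ + 2)) : ℕ) : ℤ) = (ℓ : ℤ) - (s - (ℓ + 2) : ℕ) := by
      push_cast [Nat.cast_sub hi]; ring
    simp only [Prod.fst_add, Prod.snd_add, Prod.ext_iff, hcast]
    constructor <;> ring

lemma endPt_flatten {ℓ : ℕ} :
    ∀ τ : List ℕ, Valid ℓ τ → ∀ p,
      endPt (svec ℓ) p (flatten ℓ τ) = endPt (svec ℓ) p (contract ℓ τ) := by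
  intro τ
  induction τ with
  | nil => intro _ p; rfl
  | cons s t ih =>
    intro hv p
    have hs := (valid_cons.mp hv).1
    have ht := (valid_cons.mp hv).2
    rw [flatten_cons, endPt_append, endPt_flat hs, contract_cons, endPt_cons, ih ht]

lemma NN_flatten {ℓ : ℕ} :
    ∀ τ : List ℕ, Valid ℓ τ → ∀ p,
      (NN ℓ p (flatten ℓ τ) ↔ NN ℓ p (contract ℓ τ)) := by
  intro τ
  induction τ with
  | nil => intro _ p; exact Iff.rfl
  | cons s t ih =>
    intro hv p
    have hs := (valid_cons.mp hv).1
    have ht := (valid_cons.mp hv).2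
    rw [flatten_cons, contract_cons]
    rcases hs with ⟨h1, _⟩ | ⟨h1, h2⟩
    · rw [if_pos h1, flat, if_pos h1, List.singleton_append, NN_cons, NN_cons, ih ht]
    · have hs' : ¬ s ≤ ℓ + 1 := by omega
      rw [if_neg hs', flat, if_neg hs', List.cons_append, NN_cons, NN_replicate_append,
        NN_cons, ih ht]
      set i := s - (ℓ + 2) with hidef
      have hi : i ≤ ℓ := by omega
      have hq1 : (p + svec ℓ i).1 = p.1 + (i : ℤ) := by
        rw [svec_le hi]; simp [Prod.fst_add]
      have hq2 : (p + svec ℓ i).2 = p.2 + ((ℓ : ℤ) - (i : ℤ)) := by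
        rw [svec_le hi]; simp [Prod.snd_add]
      have hcast : ((ℓ - i : ℕ) : ℤ) = (ℓ : ℤ) - (i : ℤ) := by
        push_cast [Nat.cast_sub hi]; ring
      have hpt : ((p + svec ℓ i).1 + ((ℓ - i : ℕ) : ℤ), (p + svec ℓ i).2 - ((ℓ - i : ℕ) : ℤ))
          = p + svec ℓ ℓ := by
        rw [svec_le (le_refl ℓ)]
        simp only [hq1, hq2, hcast, Prod.ext_iff, Prod.fst_add, Prod.snd_add]
        constructor <;> ring
      rw [hpt]
      constructor
      · rintro ⟨h0, _, h3⟩; exact ⟨h0, h3⟩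
      · rintro ⟨h0, h3⟩
        refine ⟨h0, ?_, h3⟩
        rw [hq2, hcast]
        omega

lemma contract_letters {ℓ : ℕ} (τ : List ℕ) : ∀ s ∈ contract ℓ τ, s ≤ ℓ + 1 := by
  intro s hs
  rw [contract, List.mem_map] at hs
  obtain ⟨a, _, ha⟩ := hs
  by_cases h : a ≤ ℓ + 1 <;> simp [h] at ha <;> omega

lemma flatten_letters {ℓ : ℕ} {τ : List ℕ} (hv : Valid ℓ τ) : ∀ s ∈ flatten ℓ τ, s ≤ ℓ + 1 := by
  intro s hs
  rw [flatten, List.mem_flatMap] at hs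
  obtain ⟨a, haτ, ha⟩ := hs
  rcases hv a haτ with ⟨h1, _⟩ | ⟨h1, h2⟩
  · rw [flat, if_pos h1] at ha; simp at ha; omega
  · rw [flat, if_neg (by omega)] at ha
    rcases List.mem_cons.mp ha with rfl | hmem
    · omega
    · rw [List.mem_replicate] at hmem; omega

lemma mem_BSet_iff {ℓ : ℕ} {n : ℤ} {ω : List ℕ} :
    ω ∈ BSet ℓ n ↔ (∀ s ∈ ω, s ≤ ℓ + 1) ∧ NN ℓ (0, n % (ℓ : ℤ)) ω ∧
      endPt (svec ℓ) (0, n % (ℓ : ℤ)) ω = (n, 0) := by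
  constructor
  · rintro ⟨⟨h1, h2⟩, h3⟩; exact ⟨h1, h2, h3⟩
  · rintro ⟨h1, h2, h3⟩; exact ⟨⟨h1, h2⟩, h3⟩

lemma mem_BSet_flatten {ℓ : ℕ} {τ : List ℕ} (hv : Valid ℓ τ) {n : ℤ} :
    flatten ℓ τ ∈ BSet ℓ n ↔ contract ℓ τ ∈ BSet ℓ n := by
  rw [mem_BSet_iff, mem_BSet_iff, endPt_flatten τ hv, NN_flatten τ hv]
  constructor
  · rintro ⟨_, h2, h3⟩; exact ⟨contract_letters τ, h2, h3⟩
  · rintro ⟨_, h2, h3⟩; exact ⟨flatten_letters hv, h2, h3⟩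

end NaraAux

namespace NaraAux

lemma mem_fiber {ℓ : ℕ} :
    ∀ (ω : List ℕ), (∀ s ∈ ω, s ≤ ℓ + 1) → ∀ τ,
      (τ ∈ fiber ℓ ω ↔ (contract ℓ τ = ω ∧ Valid ℓ τ)) := by
  intro ω
  induction ω with
  | nil =>
    intro _ τ
    rw [fiber]
    simp only [Finset.mem_singleton]
    constructor
    · rintro rfl
      exact ⟨rfl, by intro s hs; simp at hs⟩
    · rintro ⟨hc, _⟩
      cases τ with
      | nil => rfl
      | cons a b => simp [contract_cons] at hc
  | cons s t ih =>
    intro h τ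
    have ht := fun x hx => h x (List.mem_cons_of_mem _ hx)
    have hs := h s (List.mem_cons_self)
    rw [fiber]
    by_cases hsl : s = ℓ
    · subst hsl
      rw [if_pos rfl]
      simp only [Finset.mem_biUnion, Finset.mem_range, Finset.mem_image]
      constructor
      · rintro ⟨i, hi, τ', hτ', rfl⟩
        rcases (ih ht τ').mp hτ' with ⟨hc, hv⟩
        refine ⟨?_, ?_⟩
        · rw [contract_cons, if_neg (by omega), hc]
        · rw [valid_cons]
          exact ⟨Or.inr ⟨by omega, by omega⟩, hv⟩
      · rintro ⟨hc, hv⟩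
        cases τ with
        | nil => simp [contract_nil] at hc
        | cons c τ' =>
          rw [contract_cons] at hc
          have hc1 : (if c ≤ s + 1 then c else s) = s := (List.cons.injEq _ _ _ _ ▸ hc).1
          have hc2 : contract s τ' = t := (List.cons.injEq _ _ _ _ ▸ hc).2
          have hvc := (valid_cons.mp hv).1
          have hv' := (valid_cons.mp hv).2
          rcases hvc with ⟨hle, hne⟩ | ⟨hge, hle2⟩
          · rw [if_pos hle] at hc1; exact absurd hc1 hne
          · refine ⟨c - (s + 2), by omega, τ', (ih ht τ').mpr ⟨hc2, hv'⟩, ?_⟩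
            congr 1
            omega
    · rw [if_neg hsl]
      simp only [Finset.mem_image]
      constructor
      · rintro ⟨τ', hτ', rfl⟩
        rcases (ih ht τ').mp hτ' with ⟨hc, hv⟩
        refine ⟨by rw [contract_cons, if_pos hs, hc], ?_⟩
        rw [valid_cons]
        exact ⟨Or.inl ⟨hs, hsl⟩, hv⟩
      · rintro ⟨hc, hv⟩
        cases τ with
        | nil => simp [contract_nil] at hc
        | cons c τ' =>
          rw [contract_cons] at hc
          have hc1 : (if c ≤ ℓ + 1 then c else ℓ) = s := (List.cons.injEq _ _ _ _ ▸ hc).1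
          have hc2 : contract ℓ τ' = t := (List.cons.injEq _ _ _ _ ▸ hc).2
          have hvc := (valid_cons.mp hv).1
          have hv' := (valid_cons.mp hv).2
          have hcs : c = s := by
            rcases hvc with ⟨hle, _⟩ | ⟨hge, _⟩
            · rwa [if_pos hle] at hc1
            · rw [if_neg (by omega)] at hc1; exact absurd hc1.symm hsl
          subst hcs
          exact ⟨τ', (ih ht τ').mpr ⟨hc2, hv'⟩, rfl⟩

lemma sum_blocks {ℓ : ℕ} (hℓ : 1 ≤ ℓ) :
    ∑ i ∈ Finset.range ℓ, U ℓ (ℓ + 2 + i) = U ℓ ℓ := by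
  have hUl : U ℓ ℓ = -(G ℓ) := by
    rw [U, if_pos (by omega), if_neg (by omega), if_pos rfl]
  rw [hUl, G, ← Finset.sum_neg_distrib]
  apply Finset.sum_congr rfl
  intro i _
  rw [U, if_neg (by omega)]
  have h1 : ℓ + 2 + i - (ℓ + 2) = i := by omega
  rw [h1]
  congr 2
  by_cases hi : i = 0
  · simp [hi]
  · rw [if_neg (by omega), if_neg hi]

lemma fiber_sum {ℓ : ℕ} (hℓ : 1 ≤ ℓ) :
    ∀ ω : List ℕ, (∀ s ∈ ω, s ≤ ℓ + 1) →
      ∑ τ ∈ fiber ℓ ω, W ℓ τ = (ω.map (U ℓ)).prod := by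
  intro ω
  induction ω with
  | nil => intro _; rw [fiber]; simp [W_nil]
  | cons s t ih =>
    intro h
    have ht := fun x hx => h x (List.mem_cons_of_mem _ hx)
    have hs := h s (List.mem_cons_self)
    rw [fiber, List.map_cons, List.prod_cons, ← ih ht]
    by_cases hsl : s = ℓ
    · subst hsl
      rw [if_pos rfl]
      rw [Finset.sum_biUnion]
      · have hstep : ∀ i ∈ Finset.range s,
            (∑ τ ∈ (fiber s t).image (fun τ => (s + 2 + i) :: τ), W s τ)
              = U s (s + 2 + i) * ∑ τ ∈ fiber s t, W s τ := by
          intro i _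
          rw [Finset.sum_image (by intro a _ b _ hab; injection hab)]
          rw [Finset.mul_sum]
          apply Finset.sum_congr rfl
          intro τ _
          rw [W_cons]
        rw [Finset.sum_congr rfl hstep, ← Finset.sum_mul, sum_blocks hℓ]
      · intro i hi j hj hij
        simp only [Function.onFun]
        rw [Finset.disjoint_left]
        rintro a ha hb
        simp only [Finset.mem_image] at ha hb
        obtain ⟨τ1, _, rfl⟩ := ha
        obtain ⟨τ2, _, heq⟩ := hb
        have : s + 2 + j = s + 2 + i := by injection heq
        exact hij (by omega)
    · rw [if_neg hsl]
      rw [Finset.sum_image (by intro a _ b _ hab; injection hab)]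
      rw [Finset.mul_sum]
      apply Finset.sum_congr rfl
      intro τ _
      rw [W_cons]

lemma prod_count_eq {ℓ : ℕ} (g : ℕ → MvPolynomial ℕ ℤ) (hg0 : g 0 = 1) :
    ∀ ω : List ℕ, (∀ s ∈ ω, s ≤ ℓ + 1) →
      (∏ i ∈ Finset.Icc 1 (ℓ + 1), g i ^ ω.count i) = (ω.map g).prod := by
  intro ω
  induction ω with
  | nil => intro _; simp
  | cons s t ih =>
    intro h
    have ht := fun x hx => h x (List.mem_cons_of_mem _ hx)
    have hs := h s (List.mem_cons_self)
    have key : ∀ i, (s :: t).count i = t.count i + (if s = i then 1 else 0) := by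
      intro i; simp [List.count_cons]
    have h2 : (∏ i ∈ Finset.Icc 1 (ℓ + 1), g i ^ (if s = i then 1 else 0)) = g s := by
      by_cases hs0 : s = 0
      · subst hs0
        rw [hg0]
        apply Finset.prod_eq_one
        intro i hi
        simp only [Finset.mem_Icc] at hi
        rw [if_neg (by omega), pow_zero]
      · have hmem : s ∈ Finset.Icc 1 (ℓ + 1) := by simp; omega
        rw [Finset.prod_eq_single_of_mem s hmem]
        · simp
        · intro i _ hne
          rw [if_neg (fun h => hne h.symm), pow_zero]
    have h3 : (∏ i ∈ Finset.Icc 1 (ℓ + 1), g i ^ (s :: t).count i)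
        = (∏ i ∈ Finset.Icc 1 (ℓ + 1), g i ^ t.count i)
          * ∏ i ∈ Finset.Icc 1 (ℓ + 1), g i ^ (if s = i then 1 else 0) := by
      rw [← Finset.prod_mul_distrib]
      apply Finset.prod_congr rfl
      intro i _
      rw [key i, pow_add]
    rw [h3, h2, ih ht, List.map_cons, List.prod_cons, mul_comm]

lemma factor_eq {ℓ : ℕ} (hℓ : 1 ≤ ℓ) : NarayanaFactor ℓ = MvPolynomial.X ℓ + G ℓ := by
  rw [NarayanaFactor, Finset.sum_range_succ, G, if_neg (by omega), Nat.sub_self, pow_zero,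
    mul_one, add_comm]

lemma dvd_sub_subst {ℓ : ℕ} (hℓ : 1 ≤ ℓ) (P : MvPolynomial ℕ ℤ) :
    NarayanaFactor ℓ ∣
      P - MvPolynomial.aeval (fun j => if j = ℓ then -(G ℓ) else MvPolynomial.X j) P := by
  set f : ℕ → MvPolynomial ℕ ℤ := fun j => if j = ℓ then -(G ℓ) else MvPolynomial.X j with hf
  induction P using MvPolynomial.induction_on with
  | C a => simp [MvPolynomial.aeval_C, MvPolynomial.algebraMap_eq]
  | add p q hp hq =>
    have heq : p + q - MvPolynomial.aeval f (p + q)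
        = (p - MvPolynomial.aeval f p) + (q - MvPolynomial.aeval f q) := by
      rw [map_add]; ring
    rw [heq]
    exact dvd_add hp hq
  | mul_X p j hp =>
    have h1 : NarayanaFactor ℓ ∣ (MvPolynomial.X j - f j) := by
      by_cases hj : j = ℓ
      · subst hj
        have hfj : f j = -(G j) := by rw [hf]; simp
        rw [hfj, sub_neg_eq_add, ← factor_eq hℓ]
      · rw [hf]
        simp only [if_neg hj, sub_self]
        exact dvd_zero _
    have heq : p * MvPolynomial.X j - MvPolynomial.aeval f (p * MvPolynomial.X j)
        = p * (MvPolynomial.X j - f j) + (p - MvPolynomial.aeval f p) * f j := by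
      rw [map_mul, MvPolynomial.aeval_X]; ring
    rw [heq]
    exact dvd_add (h1.mul_left p) (hp.mul_right _)

end NaraAux

namespace NaraAux

lemma take_inv {ℓ : ℕ} :
    ∀ t : List ℕ, Valid ℓ t → ∀ m : ℕ,
      ((inv ℓ t).take m = List.replicate m (ℓ + 1) ↔ t.take m = List.replicate m (ℓ + 1)) := by
  intro t
  induction t with
  | nil => intro _ m; exact Iff.rfl
  | cons s t ih =>
    intro hv m
    obtain ⟨hs, ht⟩ := valid_cons.mp hv
    cases m with
    | zero => simp
    | succ m =>
      simp only [inv]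
      by_cases h1 : ℓ + 2 ≤ s
      · rw [if_pos h1, List.take_succ_cons, List.take_succ_cons, List.replicate_succ]
        have hbound : s ≤ 2 * ℓ + 1 := by
          rcases hs with ⟨h, _⟩ | ⟨_, h⟩
          · omega
          · exact h
        constructor
        · intro h; injection h with hh _; omega
        · intro h; injection h with hh _; omega
      · rw [if_neg h1]
        by_cases h2 : s < ℓ ∧ t.take (ℓ - s) = List.replicate (ℓ - s) (ℓ + 1)
        · rw [if_pos h2, List.take_succ_cons, List.take_succ_cons, List.replicate_succ]
          constructor
          · intro h; injection h with hh _; omega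
          · intro h; injection h with hh _; exact absurd hh (by omega)
        · rw [if_neg h2, List.take_succ_cons, List.take_succ_cons, List.replicate_succ]
          simp only [List.cons.injEq]
          rw [ih ht m]

lemma valid_inv {ℓ : ℕ} : ∀ t : List ℕ, Valid ℓ t → Valid ℓ (inv ℓ t) := by
  intro t
  induction t with
  | nil => intro h; exact h
  | cons s t ih =>
    intro hv
    obtain ⟨hs, ht⟩ := valid_cons.mp hv
    simp only [inv]
    by_cases h1 : ℓ + 2 ≤ s
    · rw [if_pos h1]
      have hb : s ≤ 2 * ℓ + 1 := by
        rcases hs with ⟨h, _⟩ | ⟨_, h⟩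
        · omega
        · exact h
      intro x hx
      rcases List.mem_cons.mp hx with rfl | hx'
      · left; constructor <;> omega
      · rcases List.mem_append.mp hx' with hxr | hxt
        · rw [List.mem_replicate] at hxr
          left
          constructor <;> omega
        · exact ht x hxt
    · rw [if_neg h1]
      by_cases h2 : s < ℓ ∧ t.take (ℓ - s) = List.replicate (ℓ - s) (ℓ + 1)
      · rw [if_pos h2]
        intro x hx
        rcases List.mem_cons.mp hx with rfl | hx'
        · right; constructor <;> omega
        · exact ht x (List.mem_of_mem_drop hx')
      · rw [if_neg h2]
        intro x hx
        rcases List.mem_cons.mp hx with rfl | hx'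
        · exact hv x (List.mem_cons_self)
        · exact ih ht x hx'

lemma flatten_inv {ℓ : ℕ} : ∀ t : List ℕ, Valid ℓ t → flatten ℓ (inv ℓ t) = flatten ℓ t := by
  intro t
  induction t with
  | nil => intro _; rfl
  | cons s t ih =>
    intro hv
    obtain ⟨hs, ht⟩ := valid_cons.mp hv
    simp only [inv]
    by_cases h1 : ℓ + 2 ≤ s
    · rw [if_pos h1]
      have hb : s ≤ 2 * ℓ + 1 := by
        rcases hs with ⟨h, _⟩ | ⟨_, h⟩
        · omega
        · exact h
      rw [flatten_cons, flatten_cons, flatten_append, flatten_replicate_D]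
      rw [flat, if_pos (by omega : s - (ℓ + 2) ≤ ℓ + 1)]
      rw [flat, if_neg (by omega)]
      simp [List.cons_append, List.append_assoc]
    · rw [if_neg h1]
      by_cases h2 : s < ℓ ∧ t.take (ℓ - s) = List.replicate (ℓ - s) (ℓ + 1)
      · rw [if_pos h2]
        obtain ⟨hsl, htk⟩ := h2
        rw [flatten_cons, flatten_cons]
        rw [flat, if_neg (by omega), flat, if_pos (by omega : s ≤ ℓ + 1)]
        have hsimp : ℓ + 2 + s - (ℓ + 2) = s := by omega
        rw [hsimp]
        have hsplit : flatten ℓ t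
            = List.replicate (ℓ - s) (ℓ + 1) ++ flatten ℓ (t.drop (ℓ - s)) := by
          conv_lhs => rw [← List.take_append_drop (ℓ - s) t]
          rw [flatten_append, htk, flatten_replicate_D]
        rw [hsplit]
        simp [List.cons_append, List.append_assoc]
      · rw [if_neg h2, flatten_cons, flatten_cons, ih ht]

lemma W_inv {ℓ : ℕ} :
    ∀ t : List ℕ, Valid ℓ t → inv ℓ t ≠ t → W ℓ (inv ℓ t) = - W ℓ t := by
  intro t
  induction t with
  | nil => intro _ hne; exact absurd rfl hne
  | cons s t ih =>
    intro hv hne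
    obtain ⟨hs, ht⟩ := valid_cons.mp hv
    simp only [inv] at hne ⊢
    by_cases h1 : ℓ + 2 ≤ s
    · rw [if_pos h1]
      have hb : s ≤ 2 * ℓ + 1 := by
        rcases hs with ⟨h, _⟩ | ⟨_, h⟩
        · omega
        · exact h
      rw [W_cons, W_cons, W_append, W_replicate_D]
      have hUs : U ℓ s = -((if s = ℓ + 2 then (1 : MvPolynomial ℕ ℤ)
          else MvPolynomial.X (s - (ℓ + 2)))
          * (MvPolynomial.X (ℓ + 1) : MvPolynomial ℕ ℤ) ^ (ℓ - (s - (ℓ + 2)))) := by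
        rw [U, if_neg (by omega)]
      have hUi : U ℓ (s - (ℓ + 2)) = (if s = ℓ + 2 then (1 : MvPolynomial ℕ ℤ)
          else MvPolynomial.X (s - (ℓ + 2))) := by
        rw [U, if_pos (by omega)]
        by_cases h0 : s = ℓ + 2
        · rw [if_pos (by omega), if_pos h0]
        · rw [if_neg (by omega), if_neg (by omega), if_neg h0]
      rw [hUs, hUi]
      ring
    · rw [if_neg h1]
      by_cases h2 : s < ℓ ∧ t.take (ℓ - s) = List.replicate (ℓ - s) (ℓ + 1)
      · rw [if_pos h2]
        obtain ⟨hsl, htk⟩ := h2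
        rw [W_cons, W_cons]
        have hUs2 : U ℓ (ℓ + 2 + s) = -((if s = 0 then (1 : MvPolynomial ℕ ℤ)
            else MvPolynomial.X s)
            * (MvPolynomial.X (ℓ + 1) : MvPolynomial ℕ ℤ) ^ (ℓ - s)) := by
          have e : ℓ + 2 + s - (ℓ + 2) = s := by omega
          rw [U, if_neg (by omega), e]
          by_cases h0 : s = 0
          · rw [if_pos (by omega), if_pos h0]
          · rw [if_neg (by omega), if_neg h0]
        have hUsv : U ℓ s = (if s = 0 then (1 : MvPolynomial ℕ ℤ) else MvPolynomial.X s) := by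
          rw [U, if_pos (by omega)]
          by_cases h0 : s = 0
          · rw [if_pos h0, if_pos h0]
          · rw [if_neg h0, if_neg (by omega), if_neg h0]
        have hWt : W ℓ t = (MvPolynomial.X (ℓ + 1) : MvPolynomial ℕ ℤ) ^ (ℓ - s)
            * W ℓ (t.drop (ℓ - s)) := by
          conv_lhs => rw [← List.take_append_drop (ℓ - s) t]
          rw [W_append, htk, W_replicate_D]
        rw [hUs2, hUsv, hWt]
        ring
      · rw [if_neg h2] at hne ⊢
        rw [if_neg h1] at hne
        rw [W_cons, W_cons, ih ht (fun hcon => hne (by rw [hcon]))]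
        ring

lemma inv_inv {ℓ : ℕ} : ∀ t : List ℕ, Valid ℓ t → inv ℓ (inv ℓ t) = t := by
  intro t
  induction t with
  | nil => intro _; rfl
  | cons s t ih =>
    intro hv
    obtain ⟨hs, ht⟩ := valid_cons.mp hv
    simp only [inv]
    by_cases h1 : ℓ + 2 ≤ s
    · rw [if_pos h1]
      have hb : s ≤ 2 * ℓ + 1 := by
        rcases hs with ⟨h, _⟩ | ⟨_, h⟩
        · omega
        · exact h
      simp only [inv]
      have hc1 : ¬ (ℓ + 2 ≤ s - (ℓ + 2)) := by omega
      have hc2 : s - (ℓ + 2) < ℓ := by omega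
      have hc3 : (List.replicate (ℓ - (s - (ℓ + 2))) (ℓ + 1) ++ t).take (ℓ - (s - (ℓ + 2)))
          = List.replicate (ℓ - (s - (ℓ + 2))) (ℓ + 1) :=
        List.take_left' (List.length_replicate)
      rw [if_neg hc1, if_pos ⟨hc2, hc3⟩, List.drop_left' (List.length_replicate)]
      congr 1
      omega
    · rw [if_neg h1]
      by_cases h2 : s < ℓ ∧ t.take (ℓ - s) = List.replicate (ℓ - s) (ℓ + 1)
      · rw [if_pos h2]
        simp only [inv]
        rw [if_pos (by omega : ℓ + 2 ≤ ℓ + 2 + s)]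
        have he : ℓ + 2 + s - (ℓ + 2) = s := by omega
        rw [he]
        congr 1
        rw [← h2.2, List.take_append_drop]
      · rw [if_neg h2]
        simp only [inv]
        rw [if_neg h1, if_neg (fun hcon => h2 ⟨hcon.1, (take_inv t ht (ℓ - s)).mp hcon.2⟩)]
        rw [ih ht]

lemma fix_no_block_pat {ℓ : ℕ} :
    ∀ t : List ℕ, inv ℓ t = t →
      (∀ s ∈ t, s < ℓ + 2) ∧
      (∀ (t₁ : List ℕ) (s : ℕ) (t₂ : List ℕ), t = t₁ ++ s :: t₂ →
        ¬(s < ℓ ∧ t₂.take (ℓ - s) = List.replicate (ℓ - s) (ℓ + 1))) := by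
  intro t
  induction t with
  | nil =>
    intro _
    constructor
    · intro s hs; simp at hs
    · intro t₁ s t₂ h
      exfalso
      cases t₁ <;> simp at h
  | cons s t ih =>
    intro hfix
    simp only [inv] at hfix
    by_cases h1 : ℓ + 2 ≤ s
    · rw [if_pos h1] at hfix
      exfalso; injection hfix with h _; omega
    · rw [if_neg h1] at hfix
      by_cases h2 : s < ℓ ∧ t.take (ℓ - s) = List.replicate (ℓ - s) (ℓ + 1)
      · rw [if_pos h2] at hfix
        exfalso; injection hfix with h _; omega
      · rw [if_neg h2] at hfix
        injection hfix with _ hfix'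
        obtain ⟨ihb, ihp⟩ := ih hfix'
        constructor
        · intro x hx
          rcases List.mem_cons.mp hx with rfl | hx'
          · omega
          · exact ihb x hx'
        · intro t₁ x t₂ heq
          cases t₁ with
          | nil =>
            simp only [List.nil_append] at heq
            injection heq with e1 e2
            subst e1; subst e2
            exact h2
          | cons a t₁' =>
            injection heq with e1 e2
            exact ihp t₁' x t₂ e2

lemma nopat_struct {ℓ : ℕ} :
    ∀ (ω : List ℕ) (p : ℤ × ℤ),
      (∀ s ∈ ω, s ≤ ℓ + 1 ∧ s ≠ ℓ) →
      NN ℓ p ω → (endPt (svec ℓ) p ω).2 = 0 →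
      (∀ (t₁ : List ℕ) (s : ℕ) (t₂ : List ℕ), ω = t₁ ++ s :: t₂ →
        ¬(s < ℓ ∧ t₂.take (ℓ - s) = List.replicate (ℓ - s) (ℓ + 1))) →
      ω = List.replicate p.2.toNat (ℓ + 1) := by
  intro ω
  induction ω with
  | nil =>
    intro p _ hnn hend _
    have hp : p.2 = 0 := hend
    rw [hp]
    rfl
  | cons s t ih =>
    intro p hlet hnn hend hnp
    have hs := hlet s (List.mem_cons_self)
    have hlt := fun x hx => hlet x (List.mem_cons_of_mem _ hx)
    have hnn' : NN ℓ (p + svec ℓ s) t := (NN_cons.mp hnn).2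
    have hp0 : 0 ≤ p.2 := (NN_cons.mp hnn).1
    have hend' : (endPt (svec ℓ) (p + svec ℓ s) t).2 = 0 := hend
    have hnp' : ∀ (t₁ : List ℕ) (x : ℕ) (t₂ : List ℕ), t = t₁ ++ x :: t₂ →
        ¬(x < ℓ ∧ t₂.take (ℓ - x) = List.replicate (ℓ - x) (ℓ + 1)) :=
      fun t₁ x t₂ hEq => hnp (s :: t₁) x t₂ (by rw [hEq, List.cons_append])
    have htd := ih (p + svec ℓ s) hlt hnn' hend' hnp'
    by_cases hD : s = ℓ + 1
    · subst hD
      rw [svec_D] at htd hnn'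
      have h2 : (p + ((1 : ℤ), (-1 : ℤ))).2 = p.2 - 1 := by
        simp [Prod.snd_add]; ring
      have hge : 0 ≤ p.2 - 1 := by
        have := hnn'.start
        rwa [h2] at this
      rw [htd, h2]
      rw [show p.2.toNat = (p.2 - 1).toNat + 1 from by omega]
      rw [List.replicate_succ]
    · exfalso
      have hsl : s < ℓ := by
        obtain ⟨a, b⟩ := hs
        omega
      apply hnp [] s t rfl
      refine ⟨hsl, ?_⟩
      rw [htd]
      have hsnd : (p + svec ℓ s).2 = p.2 + ((ℓ : ℤ) - s) := by
        rw [svec_le (by omega)]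
        simp [Prod.snd_add]
      rw [List.take_replicate]
      congr 1
      have hcast : ((ℓ - s : ℕ) : ℤ) = (ℓ : ℤ) - (s : ℤ) := by
        push_cast [Nat.cast_sub (by omega : s ≤ ℓ)]; ring
      omega

lemma no_fix {ℓ : ℕ} (hℓ : 1 ≤ ℓ) {n : ℕ} (hn : ℓ ≤ n) {τ : List ℕ}
    (hv : Valid ℓ τ) (hB : contract ℓ τ ∈ BSet ℓ (n : ℤ)) : inv ℓ τ ≠ τ := by
  intro hfix
  obtain ⟨hblk, hpat⟩ := fix_no_block_pat τ hfix
  have hlet : ∀ s ∈ τ, s ≤ ℓ + 1 ∧ s ≠ ℓ := by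
    intro s hs
    rcases hv s hs with h | h
    · exact h
    · have := hblk s hs; omega
  have hcon : contract ℓ τ = τ := by
    rw [contract]
    conv_rhs => rw [← List.map_id τ]
    apply List.map_congr_left
    intro a ha
    rw [if_pos (hlet a ha).1]
    rfl
  rw [hcon] at hB
  rw [mem_BSet_iff] at hB
  obtain ⟨_, hnn, hend⟩ := hB
  have hrep := nopat_struct τ (0, (n : ℤ) % (ℓ : ℤ)) hlet hnn (by rw [hend]) hpat
  rw [hrep, endPt_replicate] at hend
  have hx := congrArg Prod.fst hend
  simp only at hx
  have hr0 : 0 ≤ (n : ℤ) % (ℓ : ℤ) := Int.emod_nonneg _ (by exact_mod_cast (by omega : ℓ ≠ 0))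
  have hrlt : (n : ℤ) % (ℓ : ℤ) < (ℓ : ℤ) := Int.emod_lt_of_pos _ (by exact_mod_cast hℓ)
  have hnl : (ℓ : ℤ) ≤ (n : ℤ) := by exact_mod_cast hn
  omega

end NaraAux

/-- For every `n ≥ ℓ`, the `n`-th `ℓ`-Narayana polynomial is divisible by
`∑_{i=0}^{ℓ} a_i · a_{ℓ+1}^{ℓ-i}` (with `a_0 := 1`). -/
theorem narayanaFactor_dvd_narayanaPoly (ℓ : ℕ) (hℓ : 1 ≤ ℓ)
    (n : ℕ) (hn : ℓ ≤ n) :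
    NarayanaFactor ℓ ∣ NarayanaPoly ℓ n := by
  classical
  open NaraAux in
  rw [NarayanaPoly]
  by_cases hfin : (BSet ℓ (n : ℤ) ∩ Function.support fun ω : List ℕ =>
      ∏ i ∈ Finset.Icc 1 (ℓ + 1), (MvPolynomial.X i : MvPolynomial ℕ ℤ) ^ ω.count i).Finite
  swap
  · rw [finsum_mem_eq_zero_of_infinite hfin]
    exact dvd_zero _
  · rw [finsum_mem_eq_sum _ hfin]
    have hwne : ∀ ω : List ℕ,
        (∏ i ∈ Finset.Icc 1 (ℓ + 1), (MvPolynomial.X i : MvPolynomial ℕ ℤ) ^ ω.count i) ≠ 0 := by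
      intro ω
      apply Finset.prod_ne_zero_iff.mpr
      intro i _
      exact pow_ne_zero _ (MvPolynomial.X_ne_zero _)
    have hmemB : ∀ ω : List ℕ, ω ∈ hfin.toFinset ↔ ω ∈ BSet ℓ (n : ℤ) := by
      intro ω
      rw [Set.Finite.mem_toFinset]
      constructor
      · exact fun h => h.1
      · exact fun h => ⟨h, hwne ω⟩
    have hmemC : ∀ τ : List ℕ, τ ∈ hfin.toFinset.biUnion (NaraAux.fiber ℓ) ↔
        (NaraAux.contract ℓ τ ∈ BSet ℓ (n : ℤ) ∧ NaraAux.Valid ℓ τ) := by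
      intro τ
      rw [Finset.mem_biUnion]
      constructor
      · rintro ⟨ω, hω, hτ⟩
        have hb := (hmemB ω).mp hω
        have hlet : ∀ s ∈ ω, s ≤ ℓ + 1 := (NaraAux.mem_BSet_iff.mp hb).1
        obtain ⟨hc, hv⟩ := (NaraAux.mem_fiber ω hlet τ).mp hτ
        rw [hc]
        exact ⟨hb, hv⟩
      · rintro ⟨hc, hv⟩
        exact ⟨NaraAux.contract ℓ τ, (hmemB _).mpr hc,
          (NaraAux.mem_fiber _ (NaraAux.contract_letters τ) τ).mpr ⟨rfl, hv⟩⟩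
    have hdisj : (↑hfin.toFinset : Set (List ℕ)).PairwiseDisjoint (NaraAux.fiber ℓ) := by
      intro ω₁ h1 ω₂ h2 h12
      have l1 : ∀ s ∈ ω₁, s ≤ ℓ + 1 :=
        (NaraAux.mem_BSet_iff.mp ((hmemB _).mp (Finset.mem_coe.mp h1))).1
      have l2 : ∀ s ∈ ω₂, s ≤ ℓ + 1 :=
        (NaraAux.mem_BSet_iff.mp ((hmemB _).mp (Finset.mem_coe.mp h2))).1
      rw [Function.onFun, Finset.disjoint_left]
      intro τ hτ1 hτ2
      have e1 := ((NaraAux.mem_fiber ω₁ l1 τ).mp hτ1).1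
      have e2 := ((NaraAux.mem_fiber ω₂ l2 τ).mp hτ2).1
      exact h12 (e1 ▸ e2 ▸ rfl)
    have hsub := NaraAux.dvd_sub_subst hℓ
      (∑ ω ∈ hfin.toFinset,
        ∏ i ∈ Finset.Icc 1 (ℓ + 1), (MvPolynomial.X i : MvPolynomial ℕ ℤ) ^ ω.count i)
    have hzero : MvPolynomial.aeval
        (fun j => if j = ℓ then -(NaraAux.G ℓ) else MvPolynomial.X j)
        (∑ ω ∈ hfin.toFinset,
          ∏ i ∈ Finset.Icc 1 (ℓ + 1), (MvPolynomial.X i : MvPolynomial ℕ ℤ) ^ ω.count i)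
        = 0 := by
      rw [map_sum]
      have hterm : ∀ ω ∈ hfin.toFinset,
          MvPolynomial.aeval (fun j => if j = ℓ then -(NaraAux.G ℓ) else MvPolynomial.X j)
            (∏ i ∈ Finset.Icc 1 (ℓ + 1), (MvPolynomial.X i : MvPolynomial ℕ ℤ) ^ ω.count i)
          = ∑ τ ∈ NaraAux.fiber ℓ ω, NaraAux.W ℓ τ := by
        intro ω hω
        have hlet : ∀ s ∈ ω, s ≤ ℓ + 1 :=
          (NaraAux.mem_BSet_iff.mp ((hmemB ω).mp hω)).1
        rw [map_prod]
        have hstep : ∀ i ∈ Finset.Icc 1 (ℓ + 1),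
            MvPolynomial.aeval (fun j => if j = ℓ then -(NaraAux.G ℓ) else MvPolynomial.X j)
              ((MvPolynomial.X i : MvPolynomial ℕ ℤ) ^ ω.count i)
            = (NaraAux.U ℓ i) ^ ω.count i := by
          intro i hi
          simp only [Finset.mem_Icc] at hi
          rw [map_pow, MvPolynomial.aeval_X]
          congr 1
          have hU : NaraAux.U ℓ i = if i = ℓ then -(NaraAux.G ℓ) else MvPolynomial.X i := by
            rw [NaraAux.U, if_pos (by omega : i ≤ ℓ + 1), if_neg (by omega : ¬ i = 0)]
          rw [hU]
        have hU0 : NaraAux.U ℓ 0 = 1 := by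
          rw [NaraAux.U, if_pos (by omega), if_pos rfl]
        rw [Finset.prod_congr rfl hstep, NaraAux.prod_count_eq (NaraAux.U ℓ) hU0 ω hlet,
          ← NaraAux.fiber_sum hℓ ω hlet]
      rw [Finset.sum_congr rfl hterm, ← Finset.sum_biUnion hdisj]
      refine Finset.sum_involution (fun τ _ => NaraAux.inv ℓ τ) ?_ ?_ ?_ ?_
      · intro τ ha
        obtain ⟨hc, hv⟩ := (hmemC τ).mp ha
        rw [NaraAux.W_inv τ hv (NaraAux.no_fix hℓ hn hv hc)]
        ring
      · intro τ ha _
        obtain ⟨hc, hv⟩ := (hmemC τ).mp ha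
        exact NaraAux.no_fix hℓ hn hv hc
      · intro τ ha
        obtain ⟨hc, hv⟩ := (hmemC τ).mp ha
        refine (hmemC _).mpr ⟨?_, NaraAux.valid_inv τ hv⟩
        exact (NaraAux.mem_BSet_flatten (NaraAux.valid_inv τ hv)).mp
          (by rw [NaraAux.flatten_inv τ hv]; exact (NaraAux.mem_BSet_flatten hv).mpr hc)
      · intro τ ha
        obtain ⟨_, hv⟩ := (hmemC τ).mp ha
        exact NaraAux.inv_inv τ hv
    rw [hzero, sub_zero] at hsub
    exact hsub
end

section
/- For all integers s ≤ t and every integer r with 0 ≤ r < ℓ, the cardinalities satisfy |B^r_{s,t+1}| = (ℓ+1) · ∑_{i=0}^{r} |S^{i+ℓ}_{s,t}|. -/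
open scoped BigOperators

/-- `ω` is a small `ℓ`-Schröder path from `p`: in addition, no step `a_i`
with `1 ≤ i ≤ ℓ` starts at a point of `y`-coordinate `≤ i - 1`. -/
def IsSmall (ℓ : ℕ) (p : ℤ × ℤ) (ω : List ℕ) : Prop :=
  IsSchroder ℓ p ω ∧
  stepsOK (svec ℓ) (fun i q => 1 ≤ i → i ≤ ℓ → (i : ℤ) ≤ q.2) p ω

/-- The weight `v` of a step `a_i` (`0 ≤ i ≤ ℓ`) starting at `(x,y)` is
`b i ((x+y)/ℓ)`, and of a step `a_{ℓ+1}` it is `c ((x+y)/ℓ)`. -/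
def vWt {K : Type*} (ℓ : ℕ) (b : ℕ → ℤ → K) (c : ℤ → K) (s : ℕ) (q : ℤ × ℤ) : K :=
  if s ≤ ℓ then b s ((q.1 + q.2) / ℓ) else c ((q.1 + q.2) / ℓ)

/-- `B^r_{s,t}`: the set of (big) `ℓ`-Schröder paths from `(sℓ - r, r)`
to `(tℓ, 0)`. -/
def BigSet (ℓ : ℕ) (s t : ℤ) (r : ℕ) : Set (List ℕ) :=
  {ω | IsSchroder ℓ (s * ℓ - r, (r : ℤ)) ω ∧
    endPt (svec ℓ) (s * ℓ - r, (r : ℤ)) ω = (t * ℓ, 0)}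

/-- `S^r_{s,t}`: the set of small `ℓ`-Schröder paths from `(sℓ - r, r)`
to `(tℓ, 0)`. -/
def SmallSet (ℓ : ℕ) (s t : ℤ) (r : ℕ) : Set (List ℕ) :=
  {ω | IsSmall ℓ (s * ℓ - r, (r : ℤ)) ω ∧
    endPt (svec ℓ) (s * ℓ - r, (r : ℤ)) ω = (t * ℓ, 0)}

/-- `M^r_{s,t}`: marked `ℓ`-Schröder paths, i.e. pairs `(ω, m)` with
`ω ∈ B^r_{s,t}` having a step starting or ending at `(tℓ - m, m)`;
by convention `M^0_{t,t} = {(ε, 0)}`. -/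
def MarkedSet (ℓ : ℕ) (s t : ℤ) (r : ℕ) : Set (List ℕ × ℕ) :=
  if s = t ∧ r = 0 then {([], 0)}
  else {p | p.1 ∈ BigSet ℓ s t r ∧ p.1 ≠ [] ∧
    (t * ℓ - p.2, (p.2 : ℤ)) ∈ verts (svec ℓ) (s * ℓ - r, (r : ℤ)) p.1}

/-- `v(B^r_{s,t})`: generating function of `B^r_{s,t}`. -/
noncomputable def vB {K : Type*} [Field K] (ℓ : ℕ) (b : ℕ → ℤ → K) (c : ℤ → K)
    (s t : ℤ) (r : ℕ) : K :=
  ∑ᶠ ω ∈ BigSet ℓ s t r, pathWt (svec ℓ) (vWt ℓ b c) (s * ℓ - r, (r : ℤ)) ω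

/-- `v(S^r_{s,t})`: generating function of `S^r_{s,t}`. -/
noncomputable def vS {K : Type*} [Field K] (ℓ : ℕ) (b : ℕ → ℤ → K) (c : ℤ → K)
    (s t : ℤ) (r : ℕ) : K :=
  ∑ᶠ ω ∈ SmallSet ℓ s t r, pathWt (svec ℓ) (vWt ℓ b c) (s * ℓ - r, (r : ℤ)) ω

/-- `v(M^r_{s,t})`: generating function of `M^r_{s,t}`, a pair `(ω, m)`
having weight `v(ω) · c_{t+1}^m / c_t^m`. -/
noncomputable def vM {K : Type*} [Field K] (ℓ : ℕ) (b : ℕ → ℤ → K) (c : ℤ → K)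
    (s t : ℤ) (r : ℕ) : K :=
  ∑ᶠ p ∈ MarkedSet ℓ s t r,
    pathWt (svec ℓ) (vWt ℓ b c) (s * ℓ - r, (r : ℤ)) p.1 *
      c (t + 1) ^ p.2 / c t ^ p.2



lemma sum_Icc_nat {M : Type*} [AddCommMonoid M] (f : ℕ → M) (a b : ℕ) :
    ∑ i ∈ Finset.Icc a b, f i = ∑ i ∈ Finset.range (b+1-a), f (a+i) := by
  rw [← Finset.Ico_add_one_right_eq_Icc, Finset.sum_Ico_eq_sum_range]

-- SJ: reflect a descending range-sum into an Icc-sum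
lemma sum_reflect_Icc (ℓ : ℕ) (F : ℕ → ℕ) (h : ℕ) :
    ∑ j ∈ Finset.range (ℓ+1), F (h+ℓ-j) = ∑ k ∈ Finset.Icc h (h+ℓ), F k := by
  rw [sum_Icc_nat]
  have h1 : h + ℓ + 1 - h = ℓ + 1 := by omega
  rw [h1, ← Finset.sum_range_reflect]
  apply Finset.sum_congr rfl
  intro j hj
  simp only [Finset.mem_range] at hj
  congr 1
  omega

-- G2
lemma sum_ite_le (ℓ : ℕ) (F : ℕ → ℕ) (m : ℕ) :
    (∑ j ∈ Finset.range (ℓ+1), if j ≤ m then F (m+ℓ-j) else 0)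
      = ∑ k ∈ Finset.Icc (m-ℓ) m, F (k+ℓ) := by
  rw [← Finset.sum_filter]
  have h1 : (Finset.range (ℓ+1)).filter (· ≤ m) = Finset.range (min m ℓ + 1) := by
    ext j; simp [Nat.lt_succ_iff]; omega
  rw [h1, sum_Icc_nat]
  have h2 : m + 1 - (m - ℓ) = min m ℓ + 1 := by omega
  rw [h2, ← Finset.sum_range_reflect]
  apply Finset.sum_congr rfl
  intro j hj
  simp only [Finset.mem_range] at hj
  congr 1
  omega

-- G1
lemma sum_shift_pred (F : ℕ → ℕ) (a b : ℕ) :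
    (∑ h ∈ Finset.Icc a (b+1), if h = 0 then 0 else F (h-1))
      = ∑ h ∈ Finset.Icc (a-1) b, F h := by
  rcases Nat.eq_zero_or_pos a with rfl | ha
  · rw [show Finset.Icc 0 (b+1) = insert 0 (Finset.Icc 1 (b+1)) by ext x; simp; omega]
    rw [Finset.sum_insert (by simp)]
    simp only [if_pos rfl, zero_add, Nat.zero_sub]
    rw [sum_Icc_nat, sum_Icc_nat]
    have h3 : b + 1 + 1 - 1 = b + 1 - 0 := by omega
    rw [h3, if_pos trivial, zero_add]
    apply Finset.sum_congr rfl
    intro j hj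
    rw [if_neg (by omega)]
    congr 1
    omega
  · rw [sum_Icc_nat, sum_Icc_nat]
    have h2 : b + 1 + 1 - a = b + 1 - (a-1) := by omega
    rw [h2]
    apply Finset.sum_congr rfl
    intro j hj
    rw [if_neg (by omega)]
    congr 1
    omega

def fB (ℓ : ℕ) : ℕ → ℕ → ℕ
  | 0, _ => 1
  | n+1, 0 => ∑ j ∈ Finset.range (ℓ+1), fB ℓ n (ℓ-j)
  | n+1, r+1 => fB ℓ (n+1) r + ∑ j ∈ Finset.range (ℓ+1), fB ℓ n (r+1+ℓ-j)
termination_by n r => (n, r)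

def gB (ℓ : ℕ) : ℕ → ℕ → ℕ
  | 0, _ => 1
  | n+1, 0 => ∑ j ∈ Finset.range (ℓ+1), if j ≤ 0 then gB ℓ n (0+ℓ-j) else 0
  | n+1, r+1 => gB ℓ (n+1) r + ∑ j ∈ Finset.range (ℓ+1), if j ≤ r+1 then gB ℓ n (r+1+ℓ-j) else 0
termination_by n r => (n, r)

lemma fB_succ (ℓ n r : ℕ) : fB ℓ (n+1) r =
    (if r = 0 then 0 else fB ℓ (n+1) (r-1)) + ∑ j ∈ Finset.range (ℓ+1), fB ℓ n (r+ℓ-j) := by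
  cases r <;> simp [fB]

lemma gB_succ (ℓ n r : ℕ) : gB ℓ (n+1) r =
    (if r = 0 then 0 else gB ℓ (n+1) (r-1)) + ∑ j ∈ Finset.range (ℓ+1), if j ≤ r then gB ℓ n (r+ℓ-j) else 0 := by
  cases r <;> simp [gB]

lemma lemB (ℓ : ℕ) : ∀ n r : ℕ, (ℓ ≤ r ∨ 1 ≤ n) →
    ∑ h ∈ Finset.Icc (r-ℓ) r, fB ℓ n h = (ℓ+1) * gB ℓ n r := by
  intro n
  induction n with
  | zero =>
    intro r hr
    have hr' : ℓ ≤ r := by omega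
    have h1 : ∀ h, fB ℓ 0 h = 1 := fun h => by simp [fB]
    have h2 : gB ℓ 0 r = 1 := by simp [gB]
    simp only [h1, h2, Finset.sum_const, smul_eq_mul, mul_one, Nat.card_Icc]
    omega
  | succ n IH =>
    intro r
    induction r with
    | zero =>
      intro _
      have hIcc : Finset.Icc (0-ℓ) 0 = Finset.Icc 0 0 := by
        have : 0-ℓ = 0 := by omega
        rw [this]
      rw [hIcc, Finset.Icc_self, Finset.sum_singleton]
      show fB ℓ (n+1) 0 = (ℓ+1) * gB ℓ (n+1) 0
      have hf : fB ℓ (n+1) 0 = ∑ j ∈ Finset.range (ℓ+1), fB ℓ n (ℓ-j) := by simp [fB]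
      have hg : gB ℓ (n+1) 0 = ∑ j ∈ Finset.range (ℓ+1), if j ≤ 0 then gB ℓ n (0+ℓ-j) else 0 := by
        simp [gB]
      rw [hf, hg, sum_ite_le]
      have h0 : ∀ j, ℓ - j = 0 + ℓ - j := fun j => by omega
      rw [Finset.sum_congr rfl (fun j _ => by rw [h0 j]), sum_reflect_Icc]
      have hIcc2 : Finset.Icc (0-ℓ) 0 = Finset.Icc 0 0 := by
        have : 0-ℓ = 0 := by omega
        rw [this]
      rw [hIcc2, Finset.Icc_self, Finset.sum_singleton]
      have hIcc3 : Finset.Icc (0:ℕ) (0+ℓ) = Finset.Icc (ℓ-ℓ) ℓ := by congr 1 <;> omega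
      rw [hIcc3, IH ℓ (Or.inl le_rfl), Nat.zero_add]
    | succ r IHr =>
      intro _
      have expand : ∀ h ∈ Finset.Icc (r+1-ℓ) (r+1), fB ℓ (n+1) h =
          (if h = 0 then 0 else fB ℓ (n+1) (h-1)) + ∑ j ∈ Finset.range (ℓ+1), fB ℓ n (h+ℓ-j) :=
        fun h _ => fB_succ ℓ n h
      rw [Finset.sum_congr rfl expand, Finset.sum_add_distrib]
      rw [sum_shift_pred]
      have e1 : (r+1-ℓ)-1 = r-ℓ := by omega
      rw [e1, IHr (Or.inr (by omega))]
      have inner : ∀ h ∈ Finset.Icc (r+1-ℓ) (r+1),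
          ∑ j ∈ Finset.range (ℓ+1), fB ℓ n (h+ℓ-j) = (ℓ+1) * gB ℓ n (h+ℓ) := by
        intro h _
        rw [sum_reflect_Icc]
        have heq : Finset.Icc h (h+ℓ) = Finset.Icc (h+ℓ-ℓ) (h+ℓ) := by
          have e : h+ℓ-ℓ = h := by omega
          rw [e]
        rw [heq, IH (h+ℓ) (Or.inl (by omega))]
      rw [Finset.sum_congr rfl inner]
      conv_rhs => rw [gB_succ ℓ n (r+1)]
      rw [if_neg (Nat.succ_ne_zero r), Nat.add_sub_cancel, sum_ite_le, mul_add, Finset.mul_sum]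

lemma mainN (ℓ : ℕ) : ∀ n r : ℕ, fB ℓ (n+1) r = (ℓ+1) * ∑ i ∈ Finset.range (r+1), gB ℓ n (i+ℓ) := by
  intro n r
  induction r with
  | zero =>
    rw [fB_succ, if_pos rfl, Nat.zero_add]
    have hrefl := sum_reflect_Icc ℓ (fB ℓ n) 0
    simp only [Nat.zero_add] at hrefl
    simp only [Nat.zero_add]
    rw [hrefl]
    have heq : Finset.Icc (0:ℕ) ℓ = Finset.Icc (ℓ-ℓ) ℓ := by
      have e1 : ℓ-ℓ = 0 := by omega
      rw [e1]
    rw [heq, lemB ℓ n ℓ (Or.inl le_rfl), Finset.sum_range_one, Nat.zero_add]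
  | succ r IHr =>
    rw [fB_succ, if_neg (Nat.succ_ne_zero r), Nat.add_sub_cancel, IHr, sum_reflect_Icc]
    have heq : Finset.Icc (r+1) (r+1+ℓ) = Finset.Icc (r+1+ℓ-ℓ) (r+1+ℓ) := by
      have e1 : r+1+ℓ-ℓ = r+1 := by omega
      rw [e1]
    rw [heq, lemB ℓ n (r+1+ℓ) (Or.inl (by omega))]
    simp [Finset.sum_range_succ, mul_add]
section Lemmas

variable {ℓ : ℕ}

lemma endPt_cons (vec : ℕ → ℤ × ℤ) (p : ℤ × ℤ) (a : ℕ) (ω : List ℕ) :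
    endPt vec p (a :: ω) = endPt vec (p + vec a) ω := by simp [endPt]

lemma mem_verts_self (vec : ℕ → ℤ × ℤ) (p : ℤ × ℤ) (ω : List ℕ) :
    p ∈ verts vec p ω := by cases ω <;> simp [verts]

lemma isSchroder_nil {p : ℤ × ℤ} : IsSchroder ℓ p [] ↔ 0 ≤ p.2 := by
  simp [IsSchroder, verts]

lemma isSchroder_cons {p : ℤ × ℤ} {a : ℕ} {ω : List ℕ} :
    IsSchroder ℓ p (a :: ω) ↔ a ≤ ℓ + 1 ∧ 0 ≤ p.2 ∧ IsSchroder ℓ (p + svec ℓ a) ω := by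
  simp only [IsSchroder, verts, List.forall_mem_cons]
  tauto

lemma schroder_start_nonneg {p : ℤ × ℤ} {ω : List ℕ} (h : IsSchroder ℓ p ω) : 0 ≤ p.2 :=
  h.2 p (mem_verts_self _ _ _)

lemma isSmall_cons {p : ℤ × ℤ} {a : ℕ} {ω : List ℕ} :
    IsSmall ℓ p (a :: ω) ↔ a ≤ ℓ + 1 ∧ 0 ≤ p.2 ∧ (1 ≤ a → a ≤ ℓ → (a : ℤ) ≤ p.2) ∧
      IsSmall ℓ (p + svec ℓ a) ω := by
  simp only [IsSmall, isSchroder_cons, stepsOK]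
  tauto

lemma endPt_xy_mono : ∀ (ω : List ℕ) (p : ℤ × ℤ),
    p.1 + p.2 ≤ (endPt (svec ℓ) p ω).1 + (endPt (svec ℓ) p ω).2 := by
  intro ω
  induction ω with
  | nil => intro p; simp [endPt]
  | cons a ω ih =>
    intro p
    rw [endPt_cons]
    refine le_trans ?_ (ih (p + svec ℓ a))
    have : 0 ≤ (svec ℓ a).1 + (svec ℓ a).2 := by
      rw [svec]
      split
      · push_cast; omega
      · norm_num
    simp only [Prod.fst_add, Prod.snd_add]
    linarith

lemma pt_down {s : ℤ} {r : ℕ} (hr : r ≠ 0) :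
    ((s * ℓ - r, (r : ℤ)) : ℤ × ℤ) + svec ℓ (ℓ + 1)
      = (s * ℓ - ((r - 1 : ℕ) : ℤ), ((r - 1 : ℕ) : ℤ)) := by
  rw [svec, if_neg (by omega)]
  have h1 : ((r - 1 : ℕ) : ℤ) = (r : ℤ) - 1 := by
    have : 1 ≤ r := by omega
    push_cast [this]; ring
  rw [Prod.mk_add_mk, Prod.mk.injEq]
  rw [h1]
  constructor <;> ring

lemma pt_up {s : ℤ} {r j : ℕ} (hj : j ≤ ℓ) :
    ((s * ℓ - r, (r : ℤ)) : ℤ × ℤ) + svec ℓ j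
      = ((s + 1) * ℓ - ((r + ℓ - j : ℕ) : ℤ), ((r + ℓ - j : ℕ) : ℤ)) := by
  rw [svec, if_pos hj]
  have h1 : ((r + ℓ - j : ℕ) : ℤ) = (r : ℤ) + ℓ - j := by
    have : j ≤ r + ℓ := by omega
    push_cast [this]; ring
  rw [Prod.mk_add_mk, Prod.mk.injEq, h1]
  constructor <;> ring

end Lemmas

section SetLemmas

variable {ℓ : ℕ} (hℓ : 1 ≤ ℓ)

lemma mem_bigSet_iff {s t : ℤ} {r : ℕ} {ω : List ℕ} :
    ω ∈ BigSet ℓ s t r ↔ IsSchroder ℓ (s * ℓ - r, (r : ℤ)) ω ∧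
      endPt (svec ℓ) (s * ℓ - r, (r : ℤ)) ω = (t * ℓ, 0) := Iff.rfl

lemma mem_smallSet_iff {s t : ℤ} {r : ℕ} {ω : List ℕ} :
    ω ∈ SmallSet ℓ s t r ↔ IsSmall ℓ (s * ℓ - r, (r : ℤ)) ω ∧
      endPt (svec ℓ) (s * ℓ - r, (r : ℤ)) ω = (t * ℓ, 0) := Iff.rfl

lemma smallSet_subset_bigSet {s t : ℤ} {r : ℕ} : SmallSet ℓ s t r ⊆ BigSet ℓ s t r := by
  intro ω h
  exact ⟨h.1.1, h.2⟩

include hℓ in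
lemma nil_mem_bigSet_iff {s t : ℤ} {r : ℕ} :
    [] ∈ BigSet ℓ s t r ↔ s = t ∧ r = 0 := by
  rw [mem_bigSet_iff, isSchroder_nil]
  constructor
  · rintro ⟨-, h⟩
    rw [show endPt (svec ℓ) (s * ℓ - r, (r:ℤ)) [] = (s * ℓ - r, (r:ℤ)) from rfl,
      Prod.mk.injEq] at h
    obtain ⟨h1, h2⟩ := h
    have hr : r = 0 := by exact_mod_cast h2
    subst hr
    simp only [Nat.cast_zero, sub_zero] at h1
    have : (ℓ:ℤ) ≠ 0 := by exact_mod_cast Nat.pos_iff_ne_zero.mp hℓ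
    exact ⟨mul_right_cancel₀ this h1, rfl⟩
  · rintro ⟨rfl, rfl⟩
    simp [endPt]

include hℓ in
lemma bigSet_empty_of_lt {s t : ℤ} (h : t < s) (r : ℕ) : BigSet ℓ s t r = ∅ := by
  ext ω
  simp only [Set.mem_empty_iff_false, iff_false]
  rintro ⟨-, hend⟩
  have hm := endPt_xy_mono (ℓ := ℓ) ω (s * ℓ - r, (r : ℤ))
  rw [hend] at hm
  simp only at hm
  have : (t:ℤ) * ℓ < s * ℓ := by
    apply mul_lt_mul_of_pos_right h
    exact_mod_cast hℓ
  linarith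

lemma bigSet_cons_down {s t : ℤ} {r : ℕ} (hr : r ≠ 0) (ω : List ℕ) :
    (ℓ + 1) :: ω ∈ BigSet ℓ s t r ↔ ω ∈ BigSet ℓ s t (r - 1) := by
  rw [mem_bigSet_iff, mem_bigSet_iff, isSchroder_cons, endPt_cons, pt_down hr]
  constructor
  · rintro ⟨⟨-, -, h3⟩, h4⟩; exact ⟨h3, h4⟩
  · rintro ⟨h3, h4⟩; exact ⟨⟨le_rfl, by positivity, h3⟩, h4⟩

lemma bigSet_cons_down_zero {s t : ℤ} (ω : List ℕ) :
    (ℓ + 1) :: ω ∉ BigSet ℓ s t 0 := by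
  rintro ⟨hS, -⟩
  rw [isSchroder_cons] at hS
  have h2 := schroder_start_nonneg hS.2.2
  rw [svec, if_neg (by omega)] at h2
  simp at h2

lemma bigSet_cons_up {s t : ℤ} {r j : ℕ} (hj : j ≤ ℓ) (ω : List ℕ) :
    j :: ω ∈ BigSet ℓ s t r ↔ ω ∈ BigSet ℓ (s + 1) t (r + ℓ - j) := by
  rw [mem_bigSet_iff, mem_bigSet_iff, isSchroder_cons, endPt_cons, pt_up hj]
  constructor
  · rintro ⟨⟨-, -, h3⟩, h4⟩; exact ⟨h3, h4⟩
  · rintro ⟨h3, h4⟩; exact ⟨⟨by omega, by positivity, h3⟩, h4⟩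

lemma smallSet_cons_down {s t : ℤ} {r : ℕ} (hr : r ≠ 0) (ω : List ℕ) :
    (ℓ + 1) :: ω ∈ SmallSet ℓ s t r ↔ ω ∈ SmallSet ℓ s t (r - 1) := by
  rw [mem_smallSet_iff, mem_smallSet_iff, isSmall_cons, endPt_cons, pt_down hr]
  constructor
  · rintro ⟨⟨-, -, -, h3⟩, h4⟩; exact ⟨h3, h4⟩
  · rintro ⟨h3, h4⟩
    exact ⟨⟨le_rfl, by positivity, fun _ h => absurd h (by omega), h3⟩, h4⟩

lemma smallSet_cons_down_zero {s t : ℤ} (ω : List ℕ) :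
    (ℓ + 1) :: ω ∉ SmallSet ℓ s t 0 := fun h =>
  bigSet_cons_down_zero ω (smallSet_subset_bigSet h)

lemma smallSet_cons_up {s t : ℤ} {r j : ℕ} (hj : j ≤ ℓ) (hjr : j ≤ r) (ω : List ℕ) :
    j :: ω ∈ SmallSet ℓ s t r ↔ ω ∈ SmallSet ℓ (s + 1) t (r + ℓ - j) := by
  rw [mem_smallSet_iff, mem_smallSet_iff, isSmall_cons, endPt_cons, pt_up hj]
  constructor
  · rintro ⟨⟨-, -, -, h3⟩, h4⟩; exact ⟨h3, h4⟩
  · rintro ⟨h3, h4⟩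
    refine ⟨⟨by omega, by positivity, fun _ _ => ?_, h3⟩, h4⟩
    exact_mod_cast Nat.cast_le.mpr hjr

lemma smallSet_cons_up_not {s t : ℤ} {r j : ℕ} (hj : j ≤ ℓ) (h1 : 1 ≤ j) (hjr : ¬ j ≤ r)
    (ω : List ℕ) : j :: ω ∉ SmallSet ℓ s t r := by
  rintro ⟨hS, -⟩
  rw [isSmall_cons] at hS
  have := hS.2.2.1 h1 hj
  simp only at this
  have : j ≤ r := by exact_mod_cast this
  omega

end SetLemmas

section BaseLemmas

variable {ℓ : ℕ} (hℓ : 1 ≤ ℓ)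

lemma isSmall_nil {p : ℤ × ℤ} : IsSmall ℓ p [] ↔ 0 ≤ p.2 := by
  simp [IsSmall, isSchroder_nil, stepsOK]

include hℓ in
lemma mem_bigSet_self {t : ℤ} : ∀ (ω : List ℕ) (r : ℕ),
    ω ∈ BigSet ℓ t t r → ω = List.replicate r (ℓ + 1) := by
  intro ω
  induction ω with
  | nil =>
    intro r h
    obtain ⟨-, hr⟩ := (nil_mem_bigSet_iff hℓ).1 h
    subst hr
    rfl
  | cons a ω ih =>
    intro r h
    have ha : a ≤ ℓ + 1 := (isSchroder_cons.1 h.1).1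
    by_cases hae : a = ℓ + 1
    · subst hae
      rcases r with _ | r
      · exact absurd h (bigSet_cons_down_zero ω)
      · rw [bigSet_cons_down (Nat.succ_ne_zero r) ω, Nat.succ_sub_one] at h
        rw [ih r h, List.replicate_succ]
    · have haℓ : a ≤ ℓ := by omega
      rw [bigSet_cons_up haℓ] at h
      rw [bigSet_empty_of_lt hℓ (lt_add_one t)] at h
      exact absurd h (Set.notMem_empty ω)

include hℓ in
lemma replicate_mem_smallSet {t : ℤ} : ∀ r : ℕ,
    List.replicate r (ℓ + 1) ∈ SmallSet ℓ t t r := by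
  intro r
  induction r with
  | zero =>
    rw [mem_smallSet_iff]
    constructor
    · rw [List.replicate_zero, isSmall_nil]
      positivity
    · simp [endPt]
  | succ r ih =>
    rw [List.replicate_succ, smallSet_cons_down (Nat.succ_ne_zero r), Nat.succ_sub_one]
    exact ih

include hℓ in
lemma bigSet_self (t : ℤ) (r : ℕ) : BigSet ℓ t t r = {List.replicate r (ℓ + 1)} := by
  ext ω
  rw [Set.mem_singleton_iff]
  constructor
  · exact mem_bigSet_self hℓ ω r
  · rintro rfl
    exact smallSet_subset_bigSet (replicate_mem_smallSet hℓ r)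

include hℓ in
lemma smallSet_self (t : ℤ) (r : ℕ) : SmallSet ℓ t t r = {List.replicate r (ℓ + 1)} := by
  ext ω
  rw [Set.mem_singleton_iff]
  constructor
  · intro h
    exact mem_bigSet_self hℓ ω r (smallSet_subset_bigSet h)
  · rintro rfl
    exact replicate_mem_smallSet hℓ r

end BaseLemmas

lemma card_cons_biUnion : ∀ (m : ℕ) (N : ℕ → Set (List ℕ)), (∀ a, (N a).Finite) →
    (⋃ a ∈ Finset.range m, List.cons a '' N a).Finite ∧
    (⋃ a ∈ Finset.range m, List.cons a '' N a).ncard = ∑ a ∈ Finset.range m, (N a).ncard := by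
  intro m
  induction m with
  | zero => intro N _; simp
  | succ m ih =>
    intro N hfin
    have hsplit : (⋃ a ∈ Finset.range (m+1), List.cons a '' N a)
        = List.cons m '' N m ∪ ⋃ a ∈ Finset.range m, List.cons a '' N a := by
      rw [Finset.range_add_one, Finset.set_biUnion_insert]
    obtain ⟨ihf, ihc⟩ := ih N hfin
    have hfinm : (List.cons m '' N m).Finite := (hfin m).image _
    have hdisj : Disjoint (List.cons m '' N m) (⋃ a ∈ Finset.range m, List.cons a '' N a) := by
      rw [Set.disjoint_left]
      rintro x ⟨l, -, rfl⟩ hx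
      simp only [Set.mem_iUnion, Finset.mem_range] at hx
      obtain ⟨a, ha, l', -, heq⟩ := hx
      have : a = m := (List.cons_eq_cons.mp heq).1
      omega
    constructor
    · rw [hsplit]; exact hfinm.union ihf
    · rw [hsplit, Set.ncard_union_eq hdisj hfinm ihf,
        Set.ncard_image_of_injective _ List.cons_injective, ihc,
        Finset.sum_range_succ, add_comm]

section Decomp

variable {ℓ : ℕ} (hℓ : 1 ≤ ℓ)

include hℓ in
lemma bigSet_decomp {s t : ℤ} (hst : s ≠ t) (r : ℕ) :
    BigSet ℓ s t r = ⋃ a ∈ Finset.range (ℓ+2), List.cons a ''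
      (if a = ℓ+1 then (if r = 0 then ∅ else BigSet ℓ s t (r-1))
        else BigSet ℓ (s+1) t (r+ℓ-a)) := by
  ext ω
  simp only [Set.mem_iUnion, Finset.mem_range, Set.mem_image, exists_prop]
  constructor
  · intro hω
    cases ω with
    | nil =>
      exact absurd ((nil_mem_bigSet_iff hℓ).1 hω).1 hst
    | cons a ω' =>
      have ha : a ≤ ℓ + 1 := (isSchroder_cons.1 hω.1).1
      refine ⟨a, by omega, ω', ?_, rfl⟩
      by_cases hae : a = ℓ + 1
      · subst hae
        rw [if_pos rfl]
        rcases r with _ | r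
        · exact absurd hω (bigSet_cons_down_zero ω')
        · rw [if_neg (Nat.succ_ne_zero r)]
          exact (bigSet_cons_down (Nat.succ_ne_zero r) ω').1 hω
      · rw [if_neg hae]
        exact (bigSet_cons_up (by omega) ω').1 hω
  · rintro ⟨a, ha, ω', hmem, rfl⟩
    by_cases hae : a = ℓ + 1
    · subst hae
      rw [if_pos rfl] at hmem
      rcases r with _ | r
      · rw [if_pos rfl] at hmem
        exact absurd hmem (Set.notMem_empty _)
      · rw [if_neg (Nat.succ_ne_zero r)] at hmem
        exact (bigSet_cons_down (Nat.succ_ne_zero r) ω').2 hmem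
    · rw [if_neg hae] at hmem
      exact (bigSet_cons_up (by omega) ω').2 hmem

include hℓ in
lemma smallSet_decomp {s t : ℤ} (hst : s ≠ t) (r : ℕ) :
    SmallSet ℓ s t r = ⋃ a ∈ Finset.range (ℓ+2), List.cons a ''
      (if a = ℓ+1 then (if r = 0 then ∅ else SmallSet ℓ s t (r-1))
        else (if a ≤ r then SmallSet ℓ (s+1) t (r+ℓ-a) else ∅)) := by
  ext ω
  simp only [Set.mem_iUnion, Finset.mem_range, Set.mem_image, exists_prop]
  constructor
  · intro hω
    cases ω with
    | nil =>
      exact absurd ((nil_mem_bigSet_iff hℓ).1 (smallSet_subset_bigSet hω)).1 hst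
    | cons a ω' =>
      have ha : a ≤ ℓ + 1 := (isSchroder_cons.1 hω.1.1).1
      refine ⟨a, by omega, ω', ?_, rfl⟩
      by_cases hae : a = ℓ + 1
      · subst hae
        rw [if_pos rfl]
        rcases r with _ | r
        · exact absurd hω (smallSet_cons_down_zero ω')
        · rw [if_neg (Nat.succ_ne_zero r)]
          exact (smallSet_cons_down (Nat.succ_ne_zero r) ω').1 hω
      · rw [if_neg hae]
        by_cases har : a ≤ r
        · rw [if_pos har]
          exact (smallSet_cons_up (by omega) har ω').1 hω
        · exfalso
          exact smallSet_cons_up_not (by omega) (by omega) har ω' hω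
  · rintro ⟨a, ha, ω', hmem, rfl⟩
    by_cases hae : a = ℓ + 1
    · subst hae
      rw [if_pos rfl] at hmem
      rcases r with _ | r
      · rw [if_pos rfl] at hmem
        exact absurd hmem (Set.notMem_empty _)
      · rw [if_neg (Nat.succ_ne_zero r)] at hmem
        exact (smallSet_cons_down (Nat.succ_ne_zero r) ω').2 hmem
    · rw [if_neg hae] at hmem
      by_cases har : a ≤ r
      · rw [if_pos har] at hmem
        exact (smallSet_cons_up (by omega) har ω').2 hmem
      · rw [if_neg har] at hmem
        exact absurd hmem (Set.notMem_empty _)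

end Decomp

section Cards

variable {ℓ : ℕ} (hℓ : 1 ≤ ℓ)

include hℓ in
lemma big_card : ∀ (n : ℕ) (s t : ℤ), s + n = t → ∀ r : ℕ,
    (BigSet ℓ s t r).Finite ∧ (BigSet ℓ s t r).ncard = fB ℓ n r := by
  intro n
  induction n with
  | zero =>
    intro s t hst r
    have hts : t = s := by push_cast at hst; omega
    subst hts
    rw [bigSet_self hℓ]
    exact ⟨Set.finite_singleton _, by rw [Set.ncard_singleton]; simp [fB]⟩
  | succ n IH =>
    intro s t hst r
    have hne : s ≠ t := by push_cast at hst; omega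
    have hst' : (s+1) + (n : ℤ) = t := by push_cast at hst ⊢; omega
    induction r with
    | zero =>
      rw [bigSet_decomp hℓ hne 0]
      have hfin : ∀ a, (if a = ℓ+1 then (if 0 = 0 then (∅ : Set (List ℕ)) else BigSet ℓ s t (0-1))
          else BigSet ℓ (s+1) t (0+ℓ-a)).Finite := by
        intro a
        split
        · simp
        · exact (IH (s+1) t hst' _).1
      obtain ⟨hf, hc⟩ := card_cons_biUnion (ℓ+2) _ hfin
      refine ⟨hf, ?_⟩
      rw [hc, fB_succ, if_pos rfl, Finset.sum_range_succ, if_pos rfl, if_pos rfl]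
      rw [Set.ncard_empty, add_zero, zero_add]
      rw [zero_add]
      apply Finset.sum_congr rfl
      intro a haa
      rw [Finset.mem_range] at haa
      rw [if_neg (by omega)]
      exact (IH (s+1) t hst' _).2
    | succ r IHr =>
      rw [bigSet_decomp hℓ hne (r+1)]
      have hfin : ∀ a, (if a = ℓ+1 then (if r+1 = 0 then (∅ : Set (List ℕ)) else BigSet ℓ s t (r+1-1))
          else BigSet ℓ (s+1) t (r+1+ℓ-a)).Finite := by
        intro a
        split
        · rw [if_neg (Nat.succ_ne_zero r), Nat.succ_sub_one]
          exact IHr.1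
        · exact (IH (s+1) t hst' _).1
      obtain ⟨hf, hc⟩ := card_cons_biUnion (ℓ+2) _ hfin
      refine ⟨hf, ?_⟩
      rw [hc, fB_succ, if_neg (Nat.succ_ne_zero r), Nat.succ_sub_one, Finset.sum_range_succ,
        if_pos rfl, if_neg (Nat.succ_ne_zero r), IHr.2, add_comm (fB ℓ (n+1) r)]
      congr 1
      apply Finset.sum_congr rfl
      intro a haa
      rw [Finset.mem_range] at haa
      rw [if_neg (by omega)]
      exact (IH (s+1) t hst' _).2

include hℓ in
lemma small_card : ∀ (n : ℕ) (s t : ℤ), s + n = t → ∀ r : ℕ,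
    (SmallSet ℓ s t r).Finite ∧ (SmallSet ℓ s t r).ncard = gB ℓ n r := by
  intro n
  induction n with
  | zero =>
    intro s t hst r
    have hts : t = s := by push_cast at hst; omega
    subst hts
    rw [smallSet_self hℓ]
    exact ⟨Set.finite_singleton _, by rw [Set.ncard_singleton]; simp [gB]⟩
  | succ n IH =>
    intro s t hst r
    have hne : s ≠ t := by push_cast at hst; omega
    have hst' : (s+1) + (n : ℤ) = t := by push_cast at hst ⊢; omega
    induction r with
    | zero =>
      rw [smallSet_decomp hℓ hne 0]
      have hfin : ∀ a, (if a = ℓ+1 then (if 0 = 0 then (∅ : Set (List ℕ)) else SmallSet ℓ s t (0-1))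
          else (if a ≤ 0 then SmallSet ℓ (s+1) t (0+ℓ-a) else ∅)).Finite := by
        intro a
        split
        · simp
        · split
          · exact (IH (s+1) t hst' _).1
          · simp
      obtain ⟨hf, hc⟩ := card_cons_biUnion (ℓ+2) _ hfin
      refine ⟨hf, ?_⟩
      rw [hc, gB_succ, if_pos rfl, Finset.sum_range_succ, if_pos rfl, if_pos rfl]
      rw [Set.ncard_empty, add_zero, zero_add]
      rw [zero_add]
      apply Finset.sum_congr rfl
      intro a haa
      rw [Finset.mem_range] at haa
      rw [if_neg (by omega)]
      by_cases har : a ≤ 0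
      · rw [if_pos har, if_pos har]
        exact (IH (s+1) t hst' _).2
      · rw [if_neg har, if_neg har, Set.ncard_empty]
    | succ r IHr =>
      rw [smallSet_decomp hℓ hne (r+1)]
      have hfin : ∀ a, (if a = ℓ+1 then (if r+1 = 0 then (∅ : Set (List ℕ)) else SmallSet ℓ s t (r+1-1))
          else (if a ≤ r+1 then SmallSet ℓ (s+1) t (r+1+ℓ-a) else ∅)).Finite := by
        intro a
        split
        · rw [if_neg (Nat.succ_ne_zero r), Nat.succ_sub_one]
          exact IHr.1
        · split
          · exact (IH (s+1) t hst' _).1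
          · simp
      obtain ⟨hf, hc⟩ := card_cons_biUnion (ℓ+2) _ hfin
      refine ⟨hf, ?_⟩
      rw [hc, gB_succ, if_neg (Nat.succ_ne_zero r), Nat.succ_sub_one, Finset.sum_range_succ,
        if_pos rfl, if_neg (Nat.succ_ne_zero r), IHr.2, add_comm (gB ℓ (n+1) r)]
      congr 1
      apply Finset.sum_congr rfl
      intro a haa
      rw [Finset.mem_range] at haa
      rw [if_neg (by omega)]
      by_cases har : a ≤ r+1
      · rw [if_pos har, if_pos har]
        exact (IH (s+1) t hst' _).2
      · rw [if_neg har, if_neg har, Set.ncard_empty]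

end Cards

/-- `|B^r_{s,t+1}| = (ℓ+1) ∑_{i=0}^{r} |S^{i+ℓ}_{s,t}|`. -/
theorem card_bigSet_eq (ℓ : ℕ) (hℓ : 1 ≤ ℓ)
    (s t : ℤ) (hst : s ≤ t) (r : ℕ) (hr : r < ℓ) :
    (BigSet ℓ s (t + 1) r).ncard =
      (ℓ + 1) * ∑ i ∈ Finset.range (r + 1), (SmallSet ℓ s t (i + ℓ)).ncard := by
  obtain ⟨n, hn⟩ : ∃ n : ℕ, s + (n : ℤ) = t := ⟨(t - s).toNat, by omega⟩
  have h1 := (big_card hℓ (n+1) s (t+1) (by push_cast; omega) r).2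
  rw [h1, mainN ℓ n r]
  congr 1
  apply Finset.sum_congr rfl
  intro i _
  exact ((small_card hℓ n s t hn (i+ℓ)).2).symm
end
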